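/- arXiv:2507.03104 — 6 statements merged into one kernel-verified Lean document; each statement's English description precedes it below -/
import Mathlib

section
/- For every simple mixed graph G on n vertices, the integrated Laplacian matrix 𝓘ᴸ(G) is positive semidefinite. -/
set_option linter.unusedSectionVars false

open Matrix Finset Polynomial

variable {V : Type*} [Fintype V] [DecidableEq V]

/-- Undirected adjacency matrix of the mixed graph with edge-multiplicity function `E`:
`(u,v)`-entry `E u v` for `u ≠ v`, and `(v,v)`-entry `2 * E v v`. -/
def Au (E : V → V → ℕ) : Matrix V V ℝ :=
  Matrix.of fun u v => if u = v then ((2 * E v v : ℕ) : ℝ) else ((E u v : ℕ) : ℝ)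

/-- Arc matrix of the mixed graph with arc-multiplicity function `A`. -/
def Bm (A : V → V → ℕ) : Matrix V V ℝ := Matrix.of fun u v => ((A u v : ℕ) : ℝ)

/-- Undirected degree `d v`. -/
def dU (E : V → V → ℕ) (v : V) : ℕ :=
  (∑ u ∈ Finset.univ.filter (fun u => u ≠ v), E v u) + 2 * E v v

/-- Out-degree `d⁺ v`. -/
def dOut (A : V → V → ℕ) (v : V) : ℕ := ∑ u, A v u

/-- In-degree `d⁻ v`. -/
def dIn (A : V → V → ℕ) (v : V) : ℕ := ∑ u, A u v

/-- Integrated adjacency matrix `𝓘(G) = [[Aᵤ, B], [Bᵀ, Aᵤ]]`. -/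
def intAdj (E A : V → V → ℕ) : Matrix (V ⊕ V) (V ⊕ V) ℝ :=
  Matrix.fromBlocks (Au E) (Bm A) (Bm A)ᵀ (Au E)

/-- Integrated degree matrix `𝓘ᴰ(G)`. -/
def intDeg (E A : V → V → ℕ) : Matrix (V ⊕ V) (V ⊕ V) ℝ :=
  Matrix.diagonal (Sum.elim (fun v => ((dU E v + dOut A v : ℕ) : ℝ))
    (fun v => ((dU E v + dIn A v : ℕ) : ℝ)))

/-- Integrated Laplacian matrix `𝓘ᴸ(G) = 𝓘ᴰ(G) - 𝓘(G)`. -/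
def intLap (E A : V → V → ℕ) : Matrix (V ⊕ V) (V ⊕ V) ℝ := intDeg E A - intAdj E A

/-- Integrated signless Laplacian matrix `𝓘Q(G) = 𝓘ᴰ(G) + 𝓘(G)`. -/
def intQ (E A : V → V → ℕ) : Matrix (V ⊕ V) (V ⊕ V) ℝ := intDeg E A + intAdj E A

/-- A mixed graph is simple: multiplicities at most 1, no loops, no directed loops. -/
def IsSimple (E A : V → V → ℕ) : Prop :=
  (∀ u v, E u v ≤ 1) ∧ (∀ u v, A u v ≤ 1) ∧ (∀ v, E v v = 0) ∧ (∀ v, A v v = 0)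

/-- Number of edges (excluding loops): `e(G) = (1/2)·Σ_{u ≠ v} E u v`. -/
noncomputable def numEdges (E : V → V → ℕ) : ℝ :=
  (∑ u, ∑ v ∈ Finset.univ.filter (fun v => v ≠ u), (E u v : ℝ)) / 2

/-- Number of loops: `l(G) = Σ_v E v v`. -/
noncomputable def numLoops (E : V → V → ℕ) : ℝ := ∑ v, (E v v : ℝ)

/-- Number of arcs (including directed loops): `a(G) = Σ_{u,v} A u v`. -/
noncomputable def numArcs (A : V → V → ℕ) : ℝ := ∑ u, ∑ v, (A u v : ℝ)

lemma intAdj_isHermitian (E A : V → V → ℕ) (hE : ∀ u v, E u v = E v u) :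
    (intAdj E A).IsHermitian := by
  have hAu : (Au E)ᵀ = Au E := by
    ext u v
    by_cases h : u = v
    · subst h; rfl
    · simp [Au, Matrix.transpose_apply, h, Ne.symm h, hE u v]
  show (intAdj E A)ᴴ = intAdj E A
  rw [Matrix.conjTranspose_eq_transpose_of_trivial]
  unfold intAdj
  rw [Matrix.fromBlocks_transpose, hAu, Matrix.transpose_transpose]

lemma intLap_isHermitian (E A : V → V → ℕ) (hE : ∀ u v, E u v = E v u) :
    (intLap E A).IsHermitian :=
  (Matrix.isHermitian_diagonal _).sub (intAdj_isHermitian E A hE)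

lemma intQ_isHermitian (E A : V → V → ℕ) (hE : ∀ u v, E u v = E v u) :
    (intQ E A).IsHermitian :=
  (Matrix.isHermitian_diagonal _).add (intAdj_isHermitian E A hE)

/-- The non-increasing rearrangement of a finite tuple of reals. -/
noncomputable def sortDesc {N : ℕ} (f : Fin N → ℝ) : Fin N → ℝ :=
  fun i => (f ∘ Tuple.sort f) i.rev

/-- The eigenvalues of the integrated Laplacian matrix `𝓘ᴸ(G)`, in non-increasing order:
`nuT E A hE i` is `ν_{i+1}(G)` (0-indexed). -/
noncomputable def nuT {n : ℕ} (E A : Fin n → Fin n → ℕ) (hE : ∀ u v, E u v = E v u) :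
    Fin (n + n) → ℝ :=
  sortDesc (fun i => (intLap_isHermitian E A hE).eigenvalues (finSumFinEquiv.symm i))

/-- The eigenvalues of the integrated signless Laplacian matrix `𝓘Q(G)`, in non-increasing
order: `xiT E A hE i` is `ξ_{i+1}(G)` (0-indexed). -/
noncomputable def xiT {n : ℕ} (E A : Fin n → Fin n → ℕ) (hE : ∀ u v, E u v = E v u) :
    Fin (n + n) → ℝ :=
  sortDesc (fun i => (intQ_isHermitian E A hE).eigenvalues (finSumFinEquiv.symm i))

/-- The eigenvalues of the integrated adjacency matrix `𝓘(G)`, in non-increasing order: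
`lamT E A hE i` is `λ_{i+1}(G)` (0-indexed). -/
noncomputable def lamT {n : ℕ} (E A : Fin n → Fin n → ℕ) (hE : ∀ u v, E u v = E v u) :
    Fin (n + n) → ℝ :=
  sortDesc (fun i => (intAdj_isHermitian E A hE).eigenvalues (finSumFinEquiv.symm i))

/-- Quadratic form of the integrated Laplacian. -/
lemma intLap_quadForm (E A : V → V → ℕ) (hE : ∀ u v, E u v = E v u)
    (hEd : ∀ v, E v v = 0) (x : V ⊕ V → ℝ) :
    dotProduct (star x) (intLap E A *ᵥ x) =
    ∑ u, ∑ v, ((E u v:ℝ)/2 * ((x (Sum.inl u) - x (Sum.inl v))^2 + (x (Sum.inr u) - x (Sum.inr v))^2)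
      + (A u v:ℝ) * (x (Sum.inl u) - x (Sum.inr v))^2) := by
  have hdU : ∀ v, ((dU E v : ℕ):ℝ) = ∑ u, (E v u : ℝ) := by
    intro v
    rw [dU, hEd v]
    push_cast
    rw [add_zero]
    rw [Finset.sum_filter]
    refine Finset.sum_congr rfl fun u _ => ?_
    by_cases h : u = v <;> simp [h, hEd]
  have hdO : ∀ v, ((dOut A v : ℕ):ℝ) = ∑ u, (A v u : ℝ) := by intro v; rw [dOut]; push_cast; rfl
  have hdI : ∀ v, ((dIn A v : ℕ):ℝ) = ∑ u, (A u v : ℝ) := by intro v; rw [dIn]; push_cast; rfl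
  have hif : ∀ (u : V) (f : V → ℝ),
      (∑ v, if u = v then ((2 * E v v : ℕ):ℝ) * f v else (E u v:ℝ) * f v) = ∑ v, (E u v:ℝ) * f v := by
    intro u f
    refine Finset.sum_congr rfl fun v _ => ?_
    by_cases h : u = v
    · subst h; simp [hEd]
    · simp [h]
  simp only [star_trivial, intLap, intDeg, intAdj, Matrix.sub_apply, dotProduct, mulVec,
    Fintype.sum_sum_type, Matrix.fromBlocks_apply₁₁, fromBlocks_apply₁₂, fromBlocks_apply₂₁,
    fromBlocks_apply₂₂, Matrix.diagonal_apply, Au, Bm, Matrix.of_apply, transpose_apply,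
    Sum.elim_inl, Sum.elim_inr, Sum.inl.injEq, Sum.inr.injEq, reduceCtorEq,
    if_false, sub_mul, ite_mul, zero_mul, Finset.sum_sub_distrib, Finset.sum_ite_eq,
    Finset.mem_univ, if_true, Nat.cast_add, hdU, hdO, hdI, hif]
  rw [← Finset.sum_add_distrib]
  have step1 : ∀ u : V,
      x (Sum.inl u) *
          ((∑ v, (E u v:ℝ) + ∑ v, (A u v:ℝ)) * x (Sum.inl u) -
            (∑ v, (E u v:ℝ) * x (Sum.inl v) + ∑ v, (A u v:ℝ) * x (Sum.inr v))) +
        x (Sum.inr u) *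
          ((∑ v, (E u v:ℝ) + ∑ v, (A v u:ℝ)) * x (Sum.inr u) -
            (∑ v, (A v u:ℝ) * x (Sum.inl v) + ∑ v, (E u v:ℝ) * x (Sum.inr v))) =
      ∑ v, ((E u v:ℝ) * (x (Sum.inl u))^2 + (E u v:ℝ) * (x (Sum.inr u))^2
        + (A u v:ℝ) * (x (Sum.inl u))^2 + (A v u:ℝ) * (x (Sum.inr u))^2
        - (E u v:ℝ) * (x (Sum.inl u) * x (Sum.inl v))
        - (E u v:ℝ) * (x (Sum.inr u) * x (Sum.inr v))
        - (A u v:ℝ) * (x (Sum.inl u) * x (Sum.inr v))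
        - (A v u:ℝ) * (x (Sum.inr u) * x (Sum.inl v))) := by
    intro u
    simp only [mul_sub, mul_add, add_mul, Finset.sum_mul, Finset.mul_sum,
      ← Finset.sum_add_distrib, ← Finset.sum_sub_distrib]
    refine Finset.sum_congr rfl fun v _ => by ring
  rw [Finset.sum_congr rfl fun u _ => step1 u]
  set y : V → ℝ := fun v => x (Sum.inl v) with hy
  set z : V → ℝ := fun v => x (Sum.inr v) with hz
  set f : V → V → ℝ := fun u v =>
    (E u v:ℝ) * y u ^ 2 + (E u v:ℝ) * z u ^ 2 + (A u v:ℝ) * y u ^ 2 + (A v u:ℝ) * z u ^ 2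
      - (E u v:ℝ) * (y u * y v) - (E u v:ℝ) * (z u * z v)
      - (A u v:ℝ) * (y u * z v) - (A v u:ℝ) * (z u * y v) with hf
  set g : V → V → ℝ := fun u v =>
    (E u v:ℝ) / 2 * ((y u - y v) ^ 2 + (z u - z v) ^ 2) + (A u v:ℝ) * (y u - z v) ^ 2 with hg
  show ∑ u, ∑ v, f u v = ∑ u, ∑ v, g u v
  have e1 : ∑ u : V, ∑ v : V, f v u = ∑ u : V, ∑ v : V, f u v := Finset.sum_comm
  have e2 : ∑ u : V, ∑ v : V, g v u = ∑ u : V, ∑ v : V, g u v := Finset.sum_comm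
  have e3 : (∑ u : V, ∑ v : V, f u v) + ∑ u : V, ∑ v : V, f v u
      = (∑ u : V, ∑ v : V, g u v) + ∑ u : V, ∑ v : V, g v u := by
    rw [← Finset.sum_add_distrib, ← Finset.sum_add_distrib]
    simp only [← Finset.sum_add_distrib]
    refine Finset.sum_congr rfl fun u _ => Finset.sum_congr rfl fun v _ => ?_
    simp only [hf, hg]
    rw [hE v u]
    ring
  linear_combination e3 / 2 - e1 / 2 + e2 / 2


/-- For every simple mixed graph `G` on `n` vertices, the integrated Laplacian
matrix `𝓘ᴸ(G)` is positive semidefinite. -/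
theorem stmt0 (n : ℕ) (E A : Fin n → Fin n → ℕ) (hE : ∀ u v, E u v = E v u)
    (hS : IsSimple E A) : (intLap E A).PosSemidef := by
  refine Matrix.PosSemidef.of_dotProduct_mulVec_nonneg (intLap_isHermitian E A hE) fun x => ?_
  rw [intLap_quadForm E A hE hS.2.2.1 x]
  refine Finset.sum_nonneg fun u _ => Finset.sum_nonneg fun v _ => ?_
  positivity
end

section
/- Let G be a simple mixed graph on n vertices, let u₀, v₀ be vertices with A u₀ v₀ = 1, and let H be the simple mixed graph with the same edge-multiplicity function E and with arc-multiplicity function A' agreeing with A everywhere except A' u₀ v₀ = 0 (i.e., H = G − a for the arc a from u₀ to v₀). Then 0 = ν₂ₙ(H) = ν₂ₙ(G), and for every i = 1, …, 2n−1 one has ν_{i+1}(G) ≤ ν_i(H) ≤ ν_i(G). -/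
set_option linter.unusedSectionVars false

open Matrix Finset Polynomial

variable {V : Type*} [Fintype V] [DecidableEq V]

set_option maxHeartbeats 1600000

section GenericAux
open Module
variable {ι : Type*} [Fintype ι] [DecidableEq ι]


noncomputable def qf (M : Matrix ι ι ℝ) (x : EuclideanSpace ℝ ι) : ℝ :=
  inner ℝ x (Matrix.toEuclideanLin M x)

lemma toEuclideanLin_eigenvectorBasis {M : Matrix ι ι ℝ} (hM : M.IsHermitian) (i : ι) :
    Matrix.toEuclideanLin M (hM.eigenvectorBasis i)
      = hM.eigenvalues i • hM.eigenvectorBasis i := by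
  apply (WithLp.equiv 2 (ι → ℝ)).injective
  simp only [WithLp.equiv_apply, Matrix.ofLp_toEuclideanLin_apply]
  have h := hM.mulVec_eigenvectorBasis i
  simpa using h

lemma repr_toEuclideanLin {M : Matrix ι ι ℝ} (hM : M.IsHermitian) (x : EuclideanSpace ℝ ι) (i : ι) :
    hM.eigenvectorBasis.repr (Matrix.toEuclideanLin M x) i
      = hM.eigenvalues i * hM.eigenvectorBasis.repr x i := by
  rw [OrthonormalBasis.repr_apply_apply, OrthonormalBasis.repr_apply_apply,
    ← (Matrix.isHermitian_iff_isSymmetric.1 hM) (hM.eigenvectorBasis i) x,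
    toEuclideanLin_eigenvectorBasis hM i, real_inner_smul_left]

lemma qf_eq_sum {M : Matrix ι ι ℝ} (hM : M.IsHermitian) (x : EuclideanSpace ℝ ι) :
    qf M x = ∑ i, hM.eigenvalues i * (hM.eigenvectorBasis.repr x i)^2 := by
  rw [qf, ← hM.eigenvectorBasis.repr.inner_map_map x (Matrix.toEuclideanLin M x)]
  rw [PiLp.inner_apply]
  refine Finset.sum_congr rfl fun i _ => ?_
  rw [repr_toEuclideanLin hM x i]
  simp [RCLike.inner_apply]
  ring

lemma inner_self_eq_sum {M : Matrix ι ι ℝ} (hM : M.IsHermitian) (x : EuclideanSpace ℝ ι) :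
    (inner ℝ x x : ℝ) = ∑ i, (hM.eigenvectorBasis.repr x i)^2 := by
  rw [← hM.eigenvectorBasis.repr.inner_map_map x x, PiLp.inner_apply]
  refine Finset.sum_congr rfl fun i _ => ?_
  simp [RCLike.inner_apply]

noncomputable def obSpan (b : OrthonormalBasis ι ℝ (EuclideanSpace ℝ ι)) (s : Finset ι) :
    Submodule ℝ (EuclideanSpace ℝ ι) :=
  Submodule.span ℝ (b '' (s : Set ι))

lemma finrank_obSpan (b : OrthonormalBasis ι ℝ (EuclideanSpace ℝ ι)) (s : Finset ι) :
    finrank ℝ (obSpan b s) = s.card := by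
  classical
  have hli : LinearIndependent ℝ ((↑) : (b '' (s : Set ι)) → EuclideanSpace ℝ ι) := by
    have h1 := b.orthonormal.linearIndependent.comp (Subtype.val : {a // a ∈ (s : Set ι)} → ι) Subtype.coe_injective
    have h2 : Set.range (⇑b ∘ (Subtype.val : {a // a ∈ (s : Set ι)} → ι)) = b '' (s : Set ι) := by
      simp [Set.range_comp]
    exact h2 ▸ (linearIndepOn_id_range_iff h1.injective).mpr h1
  have : Fintype (b '' (s : Set ι)) := Fintype.ofFinite _
  rw [obSpan, finrank_span_set_eq_card hli]
  rw [Set.toFinset_image]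
  rw [Finset.card_image_of_injective _ b.orthonormal.linearIndependent.injective]
  simp

lemma repr_eq_zero_of_mem_obSpan (b : OrthonormalBasis ι ℝ (EuclideanSpace ℝ ι)) {s : Finset ι}
    {x : EuclideanSpace ℝ ι} (hx : x ∈ obSpan b s) {i : ι} (hi : i ∉ s) :
    b.repr x i = 0 := by
  rw [OrthonormalBasis.repr_apply_apply]
  induction hx using Submodule.span_induction with
  | mem y hy =>
    obtain ⟨j, hj, rfl⟩ := hy
    have hij : i ≠ j := fun h => hi (h ▸ hj)
    exact b.orthonormal.2 hij
  | zero => simp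
  | add y z _ _ hy hz => rw [inner_add_right, hy, hz, add_zero]
  | smul c y _ hy => rw [real_inner_smul_right, hy, mul_zero]

lemma qf_le_of_mem {M : Matrix ι ι ℝ} (hM : M.IsHermitian) {s : Finset ι} {c : ℝ}
    (hc : ∀ i ∈ s, hM.eigenvalues i ≤ c) {x : EuclideanSpace ℝ ι}
    (hx : x ∈ obSpan hM.eigenvectorBasis s) :
    qf M x ≤ c * (inner ℝ x x : ℝ) := by
  rw [qf_eq_sum hM, inner_self_eq_sum hM, Finset.mul_sum]
  refine Finset.sum_le_sum fun i _ => ?_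
  by_cases hi : i ∈ s
  · exact mul_le_mul_of_nonneg_right (hc i hi) (sq_nonneg _)
  · rw [repr_eq_zero_of_mem_obSpan _ hx hi]; simp

lemma le_qf_of_mem {M : Matrix ι ι ℝ} (hM : M.IsHermitian) {s : Finset ι} {c : ℝ}
    (hc : ∀ i ∈ s, c ≤ hM.eigenvalues i) {x : EuclideanSpace ℝ ι}
    (hx : x ∈ obSpan hM.eigenvectorBasis s) :
    c * (inner ℝ x x : ℝ) ≤ qf M x := by
  rw [qf_eq_sum hM, inner_self_eq_sum hM, Finset.mul_sum]
  refine Finset.sum_le_sum fun i _ => ?_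
  by_cases hi : i ∈ s
  · exact mul_le_mul_of_nonneg_right (hc i hi) (sq_nonneg _)
  · rw [repr_eq_zero_of_mem_obSpan _ hx hi]; simp

lemma exists_ne_zero_mem_inf {S T : Submodule ℝ (EuclideanSpace ℝ ι)}
    (h : Fintype.card ι < finrank ℝ S + finrank ℝ T) :
    ∃ x : EuclideanSpace ℝ ι, x ≠ 0 ∧ x ∈ S ∧ x ∈ T := by
  have hd := Submodule.finrank_sup_add_finrank_inf_eq S T
  have hsup : finrank ℝ ↥(S ⊔ T) ≤ Fintype.card ι := by
    simpa [finrank_euclideanSpace] using Submodule.finrank_le (S ⊔ T)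
  have hpos : 0 < finrank ℝ ↥(S ⊓ T) := by omega
  have : Nontrivial ↥(S ⊓ T) := finrank_pos_iff.mp hpos
  obtain ⟨y, hy⟩ := exists_ne (0 : ↥(S ⊓ T))
  exact ⟨(y : EuclideanSpace ℝ ι), by simpa using hy,
    (Submodule.mem_inf.mp y.2).1, (Submodule.mem_inf.mp y.2).2⟩

lemma finrank_inf_ge (S T : Submodule ℝ (EuclideanSpace ℝ ι)) :
    finrank ℝ S + finrank ℝ T ≤ Fintype.card ι + finrank ℝ ↥(S ⊓ T) := by
  have hd := Submodule.finrank_sup_add_finrank_inf_eq S T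
  have hsup : finrank ℝ ↥(S ⊔ T) ≤ Fintype.card ι := by
    simpa [finrank_euclideanSpace] using Submodule.finrank_le (S ⊔ T)
  omega

lemma finrank_orthogonal_span_singleton_ge (v : EuclideanSpace ℝ ι) :
    Fintype.card ι - 1 ≤ finrank ℝ ((ℝ ∙ v)ᗮ) := by
  have h := Submodule.finrank_add_finrank_orthogonal (K := ℝ ∙ v)
  have h1 : finrank ℝ (ℝ ∙ v) ≤ 1 := by
    rcases eq_or_ne v 0 with rfl | hv
    · rw [Submodule.span_zero_singleton]; simp
    · rw [finrank_span_singleton hv]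
  rw [finrank_euclideanSpace] at h
  omega

noncomputable def upSet {N : ℕ} (f : Fin N → ℝ) (e : Fin N ≃ ι) (k : Fin N) : Finset ι :=
  (Finset.Ici k).image (fun j => e (Tuple.sort f j))

noncomputable def loSet {N : ℕ} (f : Fin N → ℝ) (e : Fin N ≃ ι) (k : Fin N) : Finset ι :=
  (Finset.Iic k).image (fun j => e (Tuple.sort f j))

lemma card_upSet {N : ℕ} (f : Fin N → ℝ) (e : Fin N ≃ ι) (k : Fin N) :
    (upSet f e k).card = N - k.val := by
  rw [upSet, Finset.card_image_of_injective _
    (fun a b hab => (Tuple.sort f).injective (e.injective hab)), Fin.card_Ici]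

lemma card_loSet {N : ℕ} (f : Fin N → ℝ) (e : Fin N ≃ ι) (k : Fin N) :
    (loSet f e k).card = k.val + 1 := by
  rw [loSet, Finset.card_image_of_injective _
    (fun a b hab => (Tuple.sort f).injective (e.injective hab)), Fin.card_Iic]

lemma le_of_mem_upSet {N : ℕ} {M : Matrix ι ι ℝ} (hM : M.IsHermitian) (e : Fin N ≃ ι) (k : Fin N)
    {a : ι} (ha : a ∈ upSet (hM.eigenvalues ∘ e) e k) :
    (hM.eigenvalues ∘ e) (Tuple.sort (hM.eigenvalues ∘ e) k) ≤ hM.eigenvalues a := by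
  obtain ⟨j, hj, rfl⟩ := Finset.mem_image.mp ha
  have := Tuple.monotone_sort (hM.eigenvalues ∘ e) (Finset.mem_Ici.mp hj)
  simpa using this

lemma ge_of_mem_loSet {N : ℕ} {M : Matrix ι ι ℝ} (hM : M.IsHermitian) (e : Fin N ≃ ι) (k : Fin N)
    {a : ι} (ha : a ∈ loSet (hM.eigenvalues ∘ e) e k) :
    hM.eigenvalues a ≤ (hM.eigenvalues ∘ e) (Tuple.sort (hM.eigenvalues ∘ e) k) := by
  obtain ⟨j, hj, rfl⟩ := Finset.mem_image.mp ha
  have := Tuple.monotone_sort (hM.eigenvalues ∘ e) (Finset.mem_Iic.mp hj)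
  simpa using this

lemma sortDesc_mono_le {A B : Matrix ι ι ℝ} (hA : A.IsHermitian) (hB : B.IsHermitian)
    (hle : ∀ x : EuclideanSpace ℝ ι, qf A x ≤ qf B x) {N : ℕ} (e : Fin N ≃ ι) (i : Fin N) :
    sortDesc (hA.eigenvalues ∘ e) i ≤ sortDesc (hB.eigenvalues ∘ e) i := by
  have hcard : Fintype.card ι = N := by
    rw [← Fintype.card_fin N]; exact (Fintype.card_congr e.symm)
  set fA := hA.eigenvalues ∘ e with hfA
  set fB := hB.eigenvalues ∘ e with hfB
  set k := i.rev with hk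
  have hkv : k.val = N - 1 - i.val := by simp [hk, Fin.rev]; omega
  -- dimension count
  obtain ⟨x, hx0, hxA, hxB⟩ := exists_ne_zero_mem_inf
    (S := obSpan hA.eigenvectorBasis (upSet fA e k))
    (T := obSpan hB.eigenvectorBasis (loSet fB e k)) (by
      rw [finrank_obSpan, finrank_obSpan, card_upSet, card_loSet, hcard]
      have := i.isLt
      omega)
  have h1 : sortDesc fA i * (inner ℝ x x : ℝ) ≤ qf A x :=
    le_qf_of_mem hA (fun a ha => le_of_mem_upSet hA e k ha) hxA
  have h2 : qf B x ≤ sortDesc fB i * (inner ℝ x x : ℝ) :=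
    qf_le_of_mem hB (fun a ha => ge_of_mem_loSet hB e k ha) hxB
  have hpos : (0:ℝ) < inner ℝ x x := lt_of_le_of_ne real_inner_self_nonneg (fun hc => hx0 (inner_self_eq_zero.mp hc.symm))
  have := (h1.trans (hle x)).trans h2
  exact le_of_mul_le_mul_right this hpos

lemma sortDesc_succ_le {A B : Matrix ι ι ℝ} (hA : A.IsHermitian) (hB : B.IsHermitian)
    (w : EuclideanSpace ℝ ι)
    (hq : ∀ x : EuclideanSpace ℝ ι, (inner ℝ w x : ℝ) = 0 → qf B x = qf A x)
    {N : ℕ} (e : Fin N ≃ ι) (i : Fin N) (h : i.val + 1 < N) :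
    sortDesc (hB.eigenvalues ∘ e) ⟨i.val + 1, h⟩ ≤ sortDesc (hA.eigenvalues ∘ e) i := by
  have hcard : Fintype.card ι = N := by
    rw [← Fintype.card_fin N]; exact (Fintype.card_congr e.symm)
  set fA := hA.eigenvalues ∘ e with hfA
  set fB := hB.eigenvalues ∘ e with hfB
  set i' : Fin N := ⟨i.val + 1, h⟩ with hi'
  set k' := i'.rev with hk'
  set k := i.rev with hk
  have hk'v : k'.val = N - 1 - (i.val + 1) := by simp [hk', hi', Fin.rev]; omega
  have hkv : k.val = N - 1 - i.val := by simp [hk, Fin.rev]; omega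
  set W := (ℝ ∙ w)ᗮ with hW
  set T := obSpan hA.eigenvectorBasis (loSet fA e k) with hT
  have hTr : finrank ℝ ↥T = k.val + 1 := by rw [hT, finrank_obSpan, card_loSet]
  have hU : finrank ℝ ↥(T ⊓ W) ≥ N - i.val - 1 := by
    have h1 := finrank_inf_ge T W
    have h2 := finrank_orthogonal_span_singleton_ge w
    rw [← hW] at h2
    rw [hcard] at h1 h2
    omega
  obtain ⟨x, hx0, hxB, hxTW⟩ := exists_ne_zero_mem_inf
    (S := obSpan hB.eigenvectorBasis (upSet fB e k')) (T := T ⊓ W) (by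
      rw [finrank_obSpan, card_upSet, hcard]
      have := i.isLt
      omega)
  obtain ⟨hxA, hxW⟩ := Submodule.mem_inf.mp hxTW
  have hinner : (inner ℝ w x : ℝ) = 0 := by
    have := hxW
    rw [hW, Submodule.mem_orthogonal] at this
    exact this w (Submodule.mem_span_singleton_self w)
  have h1 : sortDesc fB i' * (inner ℝ x x : ℝ) ≤ qf B x :=
    le_qf_of_mem hB (fun a ha => le_of_mem_upSet hB e k' ha) hxB
  have h2 : qf A x ≤ sortDesc fA i * (inner ℝ x x : ℝ) :=
    qf_le_of_mem hA (fun a ha => ge_of_mem_loSet hA e k ha) hxA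
  have hpos : (0:ℝ) < inner ℝ x x := lt_of_le_of_ne real_inner_self_nonneg (fun hc => hx0 (inner_self_eq_zero.mp hc.symm))
  have := (h1.trans_eq (hq x hinner)).trans h2
  exact le_of_mul_le_mul_right this hpos

lemma qf_add (M P : Matrix ι ι ℝ) (x : EuclideanSpace ℝ ι) :
    qf (M + P) x = qf M x + qf P x := by
  simp [qf, inner_add_right]

lemma qf_vecMulVec (v : ι → ℝ) (x : EuclideanSpace ℝ ι) :
    qf (vecMulVec v v) x = (∑ i, v i * x i)^2 := by
  simp only [qf, Matrix.toEuclideanLin_apply, PiLp.inner_apply, RCLike.inner_apply,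
    starRingEnd_apply, star_trivial, mulVec, vecMulVec_apply, dotProduct,
    PiLp.toLp_apply]
  rw [sq, Finset.sum_mul_sum]
  rw [Finset.sum_comm]
  refine Finset.sum_congr rfl fun i _ => ?_
  rw [Finset.sum_mul]
  refine Finset.sum_congr rfl fun j _ => ?_
  ring

lemma inner_euclidean_eq (v : ι → ℝ) (x : EuclideanSpace ℝ ι) :
    (inner ℝ ((WithLp.equiv 2 (ι → ℝ)).symm v) x : ℝ) = ∑ i, v i * x i := by
  simp [PiLp.inner_apply, RCLike.inner_apply]
  exact Finset.sum_congr rfl fun i _ => mul_comm _ _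

lemma qf_mono_of_rankOne {A B : Matrix ι ι ℝ} (v : ι → ℝ) (hBA : B = A + vecMulVec v v)
    (x : EuclideanSpace ℝ ι) : qf A x ≤ qf B x := by
  rw [hBA, qf_add, qf_vecMulVec]
  nlinarith [sq_nonneg (∑ i, v i * x i)]

lemma qf_eq_of_orth {A B : Matrix ι ι ℝ} (v : ι → ℝ) (hBA : B = A + vecMulVec v v)
    (x : EuclideanSpace ℝ ι) (hx : (inner ℝ ((WithLp.equiv 2 (ι → ℝ)).symm v) x : ℝ) = 0) :
    qf B x = qf A x := by
  rw [hBA, qf_add, qf_vecMulVec]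
  rw [inner_euclidean_eq] at hx
  rw [hx]
  simp

lemma posSemidef_vecMulVec_self (v : ι → ℝ) : (vecMulVec v v).PosSemidef := by
  simpa using Matrix.posSemidef_vecMulVec_self_star v

end GenericAux


/-- vector for an arc `u₀ → v₀`. -/
def wArc (u₀ v₀ : V) : (V ⊕ V) → ℝ :=
  Sum.elim (fun u => if u = u₀ then 1 else 0) (fun v => if v = v₀ then -1 else 0)
/-- vectors for an edge `u₀ ~ v₀`. -/
def wEdgeL (u₀ v₀ : V) : (V ⊕ V) → ℝ :=
  Sum.elim (fun u => if u = u₀ then 1 else if u = v₀ then -1 else 0) (fun _ => 0)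
def wEdgeR (u₀ v₀ : V) : (V ⊕ V) → ℝ :=
  Sum.elim (fun _ => 0) (fun u => if u = u₀ then 1 else if u = v₀ then -1 else 0)

section ArcStep
variable (E A : V → V → ℕ) (u₀ v₀ : V)


lemma castA_decompose (h1 : 1 ≤ A u₀ v₀) (u v : V) :
    ((if u = u₀ ∧ v = v₀ then A u v - 1 else A u v : ℕ) : ℝ)
      = (A u v : ℝ) - (if u = u₀ ∧ v = v₀ then 1 else 0) := by
  by_cases h : u = u₀ ∧ v = v₀
  · obtain ⟨h1', h2'⟩ := h
    rw [if_pos ⟨h1', h2'⟩, if_pos ⟨h1', h2'⟩, h1', h2', Nat.cast_sub h1]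
    simp
  · rw [if_neg h, if_neg h, sub_zero]

lemma dOut_decompose (h1 : 1 ≤ A u₀ v₀) (u : V) :
    ((dOut A u : ℕ) : ℝ)
      = ((dOut (fun a b => if a = u₀ ∧ b = v₀ then A a b - 1 else A a b) u : ℕ) : ℝ)
        + (if u = u₀ then 1 else 0) := by
  simp only [dOut]
  rw [Nat.cast_sum, Nat.cast_sum,
    Finset.sum_congr rfl (fun v _ => castA_decompose A u₀ v₀ h1 u v),
    Finset.sum_sub_distrib]
  by_cases hu : u = u₀ <;> simp [hu]

lemma dIn_decompose (h1 : 1 ≤ A u₀ v₀) (v : V) :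
    ((dIn A v : ℕ) : ℝ)
      = ((dIn (fun a b => if a = u₀ ∧ b = v₀ then A a b - 1 else A a b) v : ℕ) : ℝ)
        + (if v = v₀ then 1 else 0) := by
  simp only [dIn]
  rw [Nat.cast_sum, Nat.cast_sum,
    Finset.sum_congr rfl (fun u _ => castA_decompose A u₀ v₀ h1 u v),
    Finset.sum_sub_distrib]
  by_cases hv : v = v₀ <;> simp [hv]

lemma arcStep (h1 : 1 ≤ A u₀ v₀) :
    intLap E A
      = intLap E (fun a b => if a = u₀ ∧ b = v₀ then A a b - 1 else A a b)
        + vecMulVec (wArc u₀ v₀) (wArc u₀ v₀) := by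
  set A' := fun a b => if a = u₀ ∧ b = v₀ then A a b - 1 else A a b with hA'
  ext i j
  simp only [intLap, intDeg, intAdj, Matrix.sub_apply, Matrix.add_apply, vecMulVec_apply]
  cases i with
  | inl u =>
    cases j with
    | inl u' =>
      simp only [Matrix.fromBlocks_apply₁₁, wArc, Sum.elim_inl]
      by_cases huu : u = u'
      · subst huu
        rw [Matrix.diagonal_apply_eq, Matrix.diagonal_apply_eq]
        simp only [Sum.elim_inl]
        push_cast
        rw [dOut_decompose A u₀ v₀ h1 u]
        have : Au E u u = Au (V := V) E u u := rfl
        by_cases hu : u = u₀ <;> simp [hu] <;> ring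
      · rw [Matrix.diagonal_apply_ne _ (by simp [huu]), Matrix.diagonal_apply_ne _ (by simp [huu])]
        have : ¬(u = u₀ ∧ u' = u₀) ∨ True := Or.inr trivial
        by_cases hu : u = u₀ <;> by_cases hu' : u' = u₀ <;>
          simp_all [Au] <;> ring_nf <;> simp_all
    | inr v' =>
      rw [Matrix.diagonal_apply_ne _ (by simp), Matrix.diagonal_apply_ne _ (by simp)]
      simp only [Matrix.fromBlocks_apply₁₂, wArc, Sum.elim_inl, Sum.elim_inr, Bm, Matrix.of_apply]
      rw [castA_decompose A u₀ v₀ h1 u v']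
      by_cases hu : u = u₀ <;> by_cases hv : v' = v₀ <;> simp [hu, hv] <;> ring
  | inr v =>
    cases j with
    | inl u' =>
      rw [Matrix.diagonal_apply_ne _ (by simp), Matrix.diagonal_apply_ne _ (by simp)]
      simp only [Matrix.fromBlocks_apply₂₁, wArc, Sum.elim_inl, Sum.elim_inr, Bm,
        Matrix.transpose_apply, Matrix.of_apply]
      rw [castA_decompose A u₀ v₀ h1 u' v]
      by_cases hu : u' = u₀ <;> by_cases hv : v = v₀ <;> simp [hu, hv] <;> ring
    | inr v' =>
      simp only [Matrix.fromBlocks_apply₂₂, wArc, Sum.elim_inr]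
      by_cases hvv : v = v'
      · subst hvv
        rw [Matrix.diagonal_apply_eq, Matrix.diagonal_apply_eq]
        simp only [Sum.elim_inr]
        push_cast
        rw [dIn_decompose A u₀ v₀ h1 v]
        by_cases hv : v = v₀ <;> simp [hv] <;> ring
      · rw [Matrix.diagonal_apply_ne _ (by simp [hvv]), Matrix.diagonal_apply_ne _ (by simp [hvv])]
        by_cases hv : v = v₀ <;> by_cases hv' : v' = v₀ <;>
          simp_all [Au] <;> ring_nf <;> simp_all

section EdgeStep
variable (E A : V → V → ℕ) (u₀ v₀ : V)

def Econd (u₀ v₀ a b : V) : Prop := (a = u₀ ∧ b = v₀) ∨ (a = v₀ ∧ b = u₀)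

instance : ∀ a b, Decidable (Econd u₀ v₀ a b) := fun a b => by unfold Econd; infer_instance

lemma Econd_def (u₀ v₀ a b : V) :
    Econd u₀ v₀ a b ↔ ((a = u₀ ∧ b = v₀) ∨ (a = v₀ ∧ b = u₀)) := Iff.rfl

lemma castE_decompose (hE : ∀ u v, E u v = E v u) (h1 : 1 ≤ E u₀ v₀) (a b : V) :
    ((if Econd u₀ v₀ a b then E a b - 1 else E a b : ℕ) : ℝ)
      = (E a b : ℝ) - (if Econd u₀ v₀ a b then 1 else 0) := by
  by_cases h : Econd u₀ v₀ a b
  · have hge : 1 ≤ E a b := by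
      rcases h with ⟨ha, hb⟩ | ⟨ha, hb⟩
      · rw [ha, hb]; exact h1
      · rw [ha, hb, hE v₀ u₀]; exact h1
    rw [if_pos h, if_pos h, Nat.cast_sub hge]
    simp
  · rw [if_neg h, if_neg h, sub_zero]

lemma dU_decompose (hE : ∀ u v, E u v = E v u) (hne : u₀ ≠ v₀) (h1 : 1 ≤ E u₀ v₀) (v : V) :
    ((dU E v : ℕ) : ℝ)
      = ((dU (fun a b => if Econd u₀ v₀ a b then E a b - 1 else E a b) v : ℕ) : ℝ)
        + ((if v = u₀ then 1 else 0) + (if v = v₀ then 1 else 0)) := by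
  have hvv : ((if Econd u₀ v₀ v v then E v v - 1 else E v v : ℕ) : ℝ) = (E v v : ℝ) := by
    rw [if_neg]
    rintro (⟨h1', h2'⟩ | ⟨h1', h2'⟩) <;> exact hne (h1' ▸ h2' ▸ rfl)
  have hsum : ∑ u ∈ Finset.univ.filter (fun u => u ≠ v), (if Econd u₀ v₀ v u then (1:ℝ) else 0)
      = (if v = u₀ then 1 else 0) + (if v = v₀ then 1 else 0) := by
    by_cases hu : v = u₀
    · have hv2 : v ≠ v₀ := fun h => hne (hu ▸ h)
      have hterm : ∀ u, (if Econd u₀ v₀ v u then (1:ℝ) else 0) = (if u = v₀ then 1 else 0) := by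
        intro u
        by_cases h : u = v₀
        · rw [if_pos (show Econd u₀ v₀ v u from Or.inl ⟨hu, h⟩), if_pos h]
        · rw [if_neg (fun hc => by
            rcases hc with ⟨_, hb⟩ | ⟨ha, _⟩
            · exact h hb
            · exact hne (hu ▸ ha : u₀ = v₀)), if_neg h]
      rw [Finset.sum_congr rfl (fun u _ => hterm u),
        Finset.sum_ite_eq' (Finset.univ.filter (fun u => u ≠ v)) v₀ (fun _ => (1:ℝ))]
      have : v₀ ∈ Finset.univ.filter (fun u => u ≠ v) := by
        simp [hu, Ne.symm hne]
      rw [if_pos this, if_pos hu, if_neg hv2]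
      norm_num
    · by_cases hv : v = v₀
      · have hterm : ∀ u, (if Econd u₀ v₀ v u then (1:ℝ) else 0) = (if u = u₀ then 1 else 0) := by
          intro u
          by_cases h : u = u₀
          · rw [if_pos (show Econd u₀ v₀ v u from Or.inr ⟨hv, h⟩), if_pos h]
          · rw [if_neg (fun hc => by
              rcases hc with ⟨ha, _⟩ | ⟨_, hb⟩
              · exact hne ((hv ▸ ha : v₀ = u₀)).symm
              · exact h hb), if_neg h]
        rw [Finset.sum_congr rfl (fun u _ => hterm u),
          Finset.sum_ite_eq' (Finset.univ.filter (fun u => u ≠ v)) u₀ (fun _ => (1:ℝ))]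
        have : u₀ ∈ Finset.univ.filter (fun u => u ≠ v) := by
          simp [hv, hne]
        rw [if_pos this, if_neg hu, if_pos hv]
        norm_num
      · simp only [if_neg hu, if_neg hv, add_zero]
        refine Finset.sum_eq_zero fun u _ => ?_
        rw [if_neg]
        rw [Econd_def]
        rintro (⟨h, _⟩ | ⟨h, _⟩); exact hu h; exact hv h
  simp only [dU, Nat.cast_add, Nat.cast_mul, Nat.cast_sum, Nat.cast_ofNat]
  rw [Finset.sum_congr rfl (fun u _ => castE_decompose E u₀ v₀ hE h1 v u),
    Finset.sum_sub_distrib, hvv, hsum]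
  ring

lemma AuE_decompose (hE : ∀ u v, E u v = E v u) (hne : u₀ ≠ v₀) (h1 : 1 ≤ E u₀ v₀) (a b : V) :
    Au E a b = Au (fun x y => if Econd u₀ v₀ x y then E x y - 1 else E x y) a b
      + (if Econd u₀ v₀ a b then 1 else 0) := by
  by_cases hab : a = b
  · subst hab
    have hc : ¬ Econd u₀ v₀ a a := by
      rintro (⟨h1', h2'⟩ | ⟨h1', h2'⟩) <;> exact hne (h1' ▸ h2' ▸ rfl)
    simp [Au, hc]
  · simp only [Au, Matrix.of_apply, if_neg hab]
    rw [castE_decompose E u₀ v₀ hE h1 a b]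
    ring

lemma edgeStep (hE : ∀ u v, E u v = E v u) (hne : u₀ ≠ v₀) (h1 : 1 ≤ E u₀ v₀) :
    intLap E A
      = intLap (fun x y => if Econd u₀ v₀ x y then E x y - 1 else E x y) A
        + (vecMulVec (wEdgeL u₀ v₀) (wEdgeL u₀ v₀) + vecMulVec (wEdgeR u₀ v₀) (wEdgeR u₀ v₀)) := by
  ext i j
  simp only [intLap, intDeg, intAdj, Matrix.sub_apply, Matrix.add_apply, vecMulVec_apply]
  cases i with
  | inl u =>
    cases j with
    | inl u' =>
      simp only [Matrix.fromBlocks_apply₁₁, wEdgeL, wEdgeR, Sum.elim_inl]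
      rw [AuE_decompose E u₀ v₀ hE hne h1 u u']
      by_cases huu : u = u'
      · subst huu
        rw [Matrix.diagonal_apply_eq, Matrix.diagonal_apply_eq]
        simp only [Sum.elim_inl]
        rw [Nat.cast_add, Nat.cast_add, dU_decompose E u₀ v₀ hE hne h1 u]
        have hc : ¬ Econd u₀ v₀ u u := by
          rintro (⟨h1', h2'⟩ | ⟨h1', h2'⟩) <;> exact hne (h1' ▸ h2' ▸ rfl)
        by_cases hu : u = u₀ <;> by_cases hv : u = v₀ <;>
          simp [hu, hv, hc, Econd_def] <;> ring_nf <;> simp_all <;> ring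
      · rw [Matrix.diagonal_apply_ne _ (by simp [huu]), Matrix.diagonal_apply_ne _ (by simp [huu])]
        by_cases hu : u = u₀ <;> by_cases hv : u = v₀ <;> by_cases hu' : u' = u₀ <;>
          by_cases hv' : u' = v₀ <;> simp_all [Econd_def] <;> ring
    | inr v' =>
      rw [Matrix.diagonal_apply_ne _ (by simp), Matrix.diagonal_apply_ne _ (by simp)]
      simp only [Matrix.fromBlocks_apply₁₂, wEdgeL, wEdgeR, Sum.elim_inl, Sum.elim_inr]
      ring
  | inr v =>
    cases j with
    | inl u' =>
      rw [Matrix.diagonal_apply_ne _ (by simp), Matrix.diagonal_apply_ne _ (by simp)]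
      simp only [Matrix.fromBlocks_apply₂₁, wEdgeL, wEdgeR, Sum.elim_inl, Sum.elim_inr]
      ring
    | inr v' =>
      simp only [Matrix.fromBlocks_apply₂₂, wEdgeL, wEdgeR, Sum.elim_inr]
      rw [AuE_decompose E u₀ v₀ hE hne h1 v v']
      by_cases hvv : v = v'
      · subst hvv
        rw [Matrix.diagonal_apply_eq, Matrix.diagonal_apply_eq]
        simp only [Sum.elim_inr]
        rw [Nat.cast_add, Nat.cast_add, dU_decompose E u₀ v₀ hE hne h1 v]
        have hc : ¬ Econd u₀ v₀ v v := by
          rintro (⟨h1', h2'⟩ | ⟨h1', h2'⟩) <;> exact hne (h1' ▸ h2' ▸ rfl)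
        by_cases hu : v = u₀ <;> by_cases hv : v = v₀ <;>
          simp [hu, hv, hc, Econd_def] <;> ring_nf <;> simp_all <;> ring
      · rw [Matrix.diagonal_apply_ne _ (by simp [hvv]), Matrix.diagonal_apply_ne _ (by simp [hvv])]
        by_cases hu : v = u₀ <;> by_cases hv : v = v₀ <;> by_cases hu' : v' = u₀ <;>
          by_cases hv' : v' = v₀ <;> simp_all [Econd_def] <;> ring
end EdgeStep


lemma double_sum_lt {f g : V → V → ℕ} (hle : ∀ u v, g u v ≤ f u v) (u₀ v₀ : V)
    (hlt : g u₀ v₀ < f u₀ v₀) : ∑ u, ∑ v, g u v < ∑ u, ∑ v, f u v := by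
  apply Finset.sum_lt_sum (fun u _ => Finset.sum_le_sum fun v _ => hle u v)
  exact ⟨u₀, Finset.mem_univ u₀,
    Finset.sum_lt_sum (fun v _ => hle u₀ v) ⟨v₀, Finset.mem_univ v₀, hlt⟩⟩

lemma intLap_zero (E A : V → V → ℕ) (hEz : ∀ u v, E u v = 0) (hAz : ∀ u v, A u v = 0) :
    intLap E A = 0 := by
  ext i j
  have hAu : ∀ a b, Au E a b = 0 := fun a b => by simp [Au, hEz]
  have hBm : ∀ a b, Bm A a b = 0 := fun a b => by simp [Bm, hAz]
  have hdU : ∀ v, dU E v = 0 := fun v => by simp [dU, hEz]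
  have hdO : ∀ v, dOut A v = 0 := fun v => by simp [dOut, hAz]
  have hdI : ∀ v, dIn A v = 0 := fun v => by simp [dIn, hAz]
  cases i <;> cases j <;>
    simp [intLap, intDeg, intAdj, Matrix.diagonal, hAu, hBm, hdU, hdO, hdI, Matrix.of_apply]

lemma intLap_posSemidef (E₀ A₀ : V → V → ℕ) (hE : ∀ u v, E₀ u v = E₀ v u)
    (hE0 : ∀ v, E₀ v v = 0) : (intLap E₀ A₀).PosSemidef := by
  suffices H : ∀ m (E A : V → V → ℕ), (∀ u v, E u v = E v u) → (∀ v, E v v = 0) →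
      ((∑ u, ∑ v, E u v) + ∑ u, ∑ v, A u v = m) → (intLap E A).PosSemidef from
    H _ E₀ A₀ hE hE0 rfl
  intro m
  induction m using Nat.strong_induction_on with
  | _ m ih =>
    intro E A hEs hE0' hm
    by_cases hA : ∃ u v, 1 ≤ A u v
    · obtain ⟨u₀, v₀, h1⟩ := hA
      rw [arcStep E A u₀ v₀ h1]
      set A' := fun a b => if a = u₀ ∧ b = v₀ then A a b - 1 else A a b with hA'
      have hlt : (∑ u, ∑ v, E u v) + ∑ u, ∑ v, A' u v < m := by
        have := double_sum_lt (f := A) (g := A')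
          (fun u v => by by_cases h : u = u₀ ∧ v = v₀ <;> simp [hA', h]) u₀ v₀
          (by simp [hA']; omega)
        omega
      exact ((ih _ hlt E A' hEs hE0' rfl).add (posSemidef_vecMulVec_self _))
    · by_cases hEx : ∃ u v, 1 ≤ E u v
      · obtain ⟨u₀, v₀, h1⟩ := hEx
        have hne : u₀ ≠ v₀ := by
          intro h; rw [h, hE0' v₀] at h1; omega
        rw [edgeStep E A u₀ v₀ hEs hne h1]
        set E' := fun x y => if Econd u₀ v₀ x y then E x y - 1 else E x y with hE'
        have hE's : ∀ u v, E' u v = E' v u := by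
          intro u v
          simp only [hE']
          have : Econd u₀ v₀ u v ↔ Econd u₀ v₀ v u := by
            unfold Econd; tauto
          by_cases h : Econd u₀ v₀ u v
          · rw [if_pos h, if_pos (this.mp h), hEs u v]
          · rw [if_neg h, if_neg (fun hc => h (this.mpr hc)), hEs u v]
        have hE'0 : ∀ v, E' v v = 0 := by
          intro v
          simp only [hE']
          by_cases h : Econd u₀ v₀ v v <;> simp [h, hE0' v]
        have hlt : (∑ u, ∑ v, E' u v) + ∑ u, ∑ v, A u v < m := by
          have := double_sum_lt (f := E) (g := E')
            (fun u v => by by_cases h : Econd u₀ v₀ u v <;> simp [hE', h]) u₀ v₀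
            (by simp [hE', Econd]; omega)
          omega
        exact (ih _ hlt E' A hE's hE'0 rfl).add
          ((posSemidef_vecMulVec_self _).add (posSemidef_vecMulVec_self _))
      · push_neg at hA hEx
        rw [intLap_zero E A (fun u v => by have := hEx u v; omega)
          (fun u v => by have := hA u v; omega)]
        exact Matrix.PosSemidef.zero

lemma row_sum_Au (E : V → V → ℕ) (v : V) : ∑ u, Au E v u = ((dU E v : ℕ) : ℝ) := by
  rw [← Finset.add_sum_erase _ (fun u => Au E v u) (Finset.mem_univ v)]
  have h1 : Au E v v = ((2 * E v v : ℕ) : ℝ) := by simp [Au]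
  have h2 : ∑ u ∈ Finset.univ.erase v, Au E v u
      = ∑ u ∈ Finset.univ.filter (fun u => u ≠ v), ((E v u : ℕ) : ℝ) := by
    rw [Finset.filter_ne' Finset.univ v]
    exact Finset.sum_congr rfl fun u hu => by
      simp [Au, (Finset.ne_of_mem_erase hu : u ≠ v)]
      intro h; exact absurd h.symm (Finset.ne_of_mem_erase hu)
  rw [h1, h2, dU]
  push_cast
  ring

lemma intLap_mulVec_one (E A : V → V → ℕ) (hE : ∀ u v, E u v = E v u) :
    intLap E A *ᵥ (fun _ => (1:ℝ)) = 0 := by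
  funext i
  have hdiag : ∀ (d : (V ⊕ V) → ℝ), (Matrix.diagonal d *ᵥ (fun _ => (1:ℝ))) i = d i := by
    intro d
    simp [Matrix.mulVec, Matrix.diagonal, dotProduct]
  simp only [intLap, Matrix.sub_mulVec, Pi.sub_apply, intDeg]
  rw [hdiag]
  have hadj : (intAdj E A *ᵥ fun _ => (1:ℝ)) i
      = ∑ j, intAdj E A i j := by
    simp [Matrix.mulVec, dotProduct]
  rw [hadj]
  cases i with
  | inl v =>
    rw [Fintype.sum_sum_type]
    simp only [intAdj, Matrix.fromBlocks_apply₁₁, Matrix.fromBlocks_apply₁₂, Sum.elim_inl]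
    rw [row_sum_Au E v]
    have : ∑ u : V, Bm A v u = ((dOut A v : ℕ) : ℝ) := by
      simp [Bm, dOut]
    rw [this, Pi.zero_apply]
    push_cast
    ring
  | inr v =>
    rw [Fintype.sum_sum_type]
    simp only [intAdj, Matrix.fromBlocks_apply₂₁, Matrix.fromBlocks_apply₂₂, Sum.elim_inr,
      Matrix.transpose_apply]
    rw [row_sum_Au E v]
    have : ∑ u : V, Bm A u v = ((dIn A v : ℕ) : ℝ) := by
      simp [Bm, dIn]
    rw [this, Pi.zero_apply]
    push_cast
    ring

lemma intLap_det_zero [Nonempty V] (E A : V → V → ℕ) (hE : ∀ u v, E u v = E v u) :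
    (intLap E A).det = 0 := by
  rw [← Matrix.exists_mulVec_eq_zero_iff]
  refine ⟨fun _ => 1, ?_, intLap_mulVec_one E A hE⟩
  intro h
  have := congrFun h (Sum.inl (Classical.arbitrary V))
  simp at this

lemma exists_eigenvalue_zero [Nonempty V] (E A : V → V → ℕ) (hE : ∀ u v, E u v = E v u)
    (h : (intLap E A).IsHermitian) : ∃ i, h.eigenvalues i = 0 := by
  have hdet := intLap_det_zero E A hE
  have hprod := h.det_eq_prod_eigenvalues
  rw [hdet] at hprod
  have := (Finset.prod_eq_zero_iff).mp hprod.symm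
  obtain ⟨i, _, hi⟩ := this
  exact ⟨i, by exact_mod_cast hi⟩

lemma sortDesc_last_eq_zero {N : ℕ} (f : Fin N → ℝ) (hN : 0 < N)
    (h0 : ∀ i, 0 ≤ f i) (hz : ∃ i, f i = 0) :
    sortDesc f ⟨N - 1, by omega⟩ = 0 := by
  obtain ⟨i, hi⟩ := hz
  have hrev : (⟨N - 1, by omega⟩ : Fin N).rev = ⟨0, hN⟩ := by
    ext; simp [Fin.rev]; omega
  rw [sortDesc, hrev]
  set j := (Tuple.sort f).symm i with hj
  have hgj : (f ∘ Tuple.sort f) j = 0 := by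
    simp [hj, hi]
  have hmono := Tuple.monotone_sort f
  refine le_antisymm ?_ (h0 _)
  calc (f ∘ Tuple.sort f) ⟨0, hN⟩ ≤ (f ∘ Tuple.sort f) j := hmono (by exact Nat.zero_le _)
  _ = 0 := hgj


/-- interlacing of Laplacian eigenvalues upon deleting one arc of a simple
mixed graph: `0 = ν₂ₙ(H) = ν₂ₙ(G)` and `ν_{i+1}(G) ≤ ν_i(H) ≤ ν_i(G)` for `i = 1,…,2n−1`. -/
theorem stmt3 (n : ℕ) (E A A' : Fin n → Fin n → ℕ) (hE : ∀ u v, E u v = E v u)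
    (hS : IsSimple E A) (u₀ v₀ : Fin n) (ha : A u₀ v₀ = 1)
    (hA' : ∀ u v, A' u v = if u = u₀ ∧ v = v₀ then 0 else A u v) :
    nuT E A' hE ⟨n + n - 1, by have := u₀.pos; omega⟩ = 0 ∧
    nuT E A hE ⟨n + n - 1, by have := u₀.pos; omega⟩ = 0 ∧
    (∀ i : Fin (n + n), (h : (i : ℕ) + 1 < n + n) →
      nuT E A hE ⟨(i : ℕ) + 1, h⟩ ≤ nuT E A' hE i ∧ nuT E A' hE i ≤ nuT E A hE i) := by
  obtain ⟨hE1, hA1, hE0, hA0⟩ := hS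
  have hn : 0 < n := u₀.pos
  have hNE : Nonempty (Fin n) := ⟨u₀⟩
  have hAmod : A' = fun a b => if a = u₀ ∧ b = v₀ then A a b - 1 else A a b := by
    funext a b
    rw [hA' a b]
    by_cases h : a = u₀ ∧ b = v₀
    · rw [if_pos h, if_pos h, h.1, h.2, ha]
    · rw [if_neg h, if_neg h]
  have hdecomp : intLap E A = intLap E A' + vecMulVec (wArc u₀ v₀) (wArc u₀ v₀) := by
    rw [hAmod]
    exact arcStep E A u₀ v₀ (by omega)
  have hpsd : (intLap E A).PosSemidef := intLap_posSemidef E A hE hE0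
  have hpsd' : (intLap E A').PosSemidef := intLap_posSemidef E A' hE hE0
  refine ⟨?_, ?_, ?_⟩
  · apply sortDesc_last_eq_zero _ (by omega)
    · intro i
      exact hpsd'.eigenvalues_nonneg _
    · obtain ⟨j, hj⟩ := exists_eigenvalue_zero E A' hE (intLap_isHermitian E A' hE)
      exact ⟨finSumFinEquiv j, by simpa using hj⟩
  · apply sortDesc_last_eq_zero _ (by omega)
    · intro i
      exact hpsd.eigenvalues_nonneg _
    · obtain ⟨j, hj⟩ := exists_eigenvalue_zero E A hE (intLap_isHermitian E A hE)
      exact ⟨finSumFinEquiv j, by simpa using hj⟩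
  · intro i h
    constructor
    · exact sortDesc_succ_le (intLap_isHermitian E A' hE) (intLap_isHermitian E A hE)
        ((WithLp.equiv 2 ((Fin n ⊕ Fin n) → ℝ)).symm (wArc u₀ v₀))
        (fun x hx => qf_eq_of_orth (wArc u₀ v₀) hdecomp x hx)
        finSumFinEquiv.symm i h
    · exact sortDesc_mono_le (intLap_isHermitian E A' hE) (intLap_isHermitian E A hE)
        (fun x => qf_mono_of_rankOne (wArc u₀ v₀) hdecomp x) finSumFinEquiv.symm i
end ArcStep
end

section
/- Let k, m ≥ 1 and let K^M_{k(m)} be the complete k-partite mixed graph with parts of size m: vertex set Fin k × Fin m, with E((i,a),(j,b)) = 1 and A((i,a),(j,b)) = 1 when i ≠ j, and both equal to 0 when i = j. Then the characteristic polynomial of 𝓘ᴸ(K^M_{k(m)}) equals x · (x − 2mk)^{k−1} · (x − (2mk − 2m))^{2mk−k}; equivalently, the eigenvalues of 𝓘ᴸ(K^M_{k(m)}) are 0 with multiplicity 1, 2mk with multiplicity k−1, and 2mk−2m with multiplicity 2mk−k. -/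
set_option linter.unusedSectionVars false

open Matrix Finset Polynomial

variable {V : Type*} [Fintype V] [DecidableEq V]

lemma evalCharpoly {n : Type*} [Fintype n] [DecidableEq n] (M : Matrix n n ℝ) (r : ℝ) :
    (M.charpoly).eval r =
      (Matrix.of fun i j => (if i = j then r else 0) - M i j).det := by
  unfold Matrix.charpoly
  rw [← Polynomial.coe_evalRingHom, RingHom.map_det]
  congr 1
  ext i j
  by_cases h : i = j <;>
    simp [charmatrix_apply, Matrix.diagonal_apply, h, Matrix.map_apply]

lemma Jdet {T : Type*} [Fintype T] [DecidableEq T] [Nonempty T] (a : ℝ) (ha : a ≠ 0) :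
    (a • (1 : Matrix T T ℝ) - Matrix.of (fun _ _ => (1:ℝ))).det
      = a ^ (Fintype.card T - 1) * (a - Fintype.card T) := by
  have key : a • (1 : Matrix T T ℝ) - Matrix.of (fun _ _ => (1:ℝ))
      = a • (1 + Matrix.replicateCol Unit (fun _ => -a⁻¹) * Matrix.replicateRow Unit (fun _ => (1:ℝ))) := by
    ext i j
    simp only [Matrix.sub_apply, Matrix.smul_apply, Matrix.add_apply, Matrix.one_apply,
      Matrix.mul_apply, Matrix.replicateCol_apply, Matrix.replicateRow_apply, Matrix.of_apply,
      Finset.sum_const, Finset.card_univ, Fintype.card_unit, one_smul, smul_eq_mul]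
    split_ifs <;> field_simp <;> ring
  rw [key, Matrix.det_smul, Matrix.det_one_add_replicateCol_mul_replicateRow]
  have hcard : (Fintype.card T - 1) + 1 = Fintype.card T :=
    Nat.succ_pred_eq_of_pos Fintype.card_pos
  rw [← hcard, pow_succ]
  simp only [dotProduct, smul_eq_mul, Finset.sum_const, Finset.card_univ, nsmul_eq_mul,
    mul_neg, mul_one, one_mul]
  rw [← hcard]
  push_cast
  field_simp
  ring


lemma count1 {k m : ℕ} (i : Fin k) :
    ∑ u : Fin k × Fin m, (if i = u.1 then (0:ℕ) else 1) = (k-1)*m := by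
  rw [Fintype.sum_prod_type]
  have h1 : ∀ j : Fin k, ∑ _b : Fin m, (if i = j then (0:ℕ) else 1)
      = (if i = j then 0 else m) := by
    intro j; split_ifs <;> simp
  simp only [h1]
  rw [← Finset.add_sum_erase _ _ (Finset.mem_univ i), if_pos rfl, zero_add,
    Finset.sum_congr rfl (fun j hj => if_neg (fun h => Finset.ne_of_mem_erase hj h.symm)),
    Finset.sum_const, Finset.card_erase_of_mem (Finset.mem_univ i), Finset.card_univ,
    Fintype.card_fin, smul_eq_mul]

lemma count1' {k m : ℕ} (i : Fin k) :
    ∑ u : Fin k × Fin m, (if u.1 = i then (0:ℕ) else 1) = (k-1)*m := by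
  rw [← count1 i]
  exact Finset.sum_congr rfl fun u _ => if_congr eq_comm rfl rfl

lemma count2 {k m : ℕ} (i : Fin k) :
    ∑ v : Fin k × Fin m, (if i = v.1 then (1:ℝ) else 0) = m := by
  rw [Fintype.sum_prod_type]
  have h1 : ∀ j : Fin k, ∑ _b : Fin m, (if i = j then (1:ℝ) else 0)
      = if i = j then (m:ℝ) else 0 := by
    intro j; split_ifs <;> simp
  simp only [h1]
  rw [Finset.sum_ite_eq]
  simp

/-- the characteristic polynomial of `𝓘ᴸ(K^M_{k(m)})` is
`x · (x − 2mk)^(k−1) · (x − (2mk − 2m))^(2mk−k)`. -/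
theorem stmt5 (k m : ℕ) (hk : 1 ≤ k) (hm : 1 ≤ m)
    (E A : Fin k × Fin m → Fin k × Fin m → ℕ)
    (hEdef : ∀ p q, E p q = if p.1 = q.1 then 0 else 1)
    (hAdef : ∀ p q, A p q = if p.1 = q.1 then 0 else 1) :
    (intLap E A).charpoly =
      Polynomial.X * (Polynomial.X - Polynomial.C (2 * (m : ℝ) * k)) ^ (k - 1) *
        (Polynomial.X - Polynomial.C (2 * (m : ℝ) * k - 2 * m)) ^ (2 * m * k - k) := by
  classical
  apply Polynomial.eq_of_infinite_eval_eq
  apply Set.Infinite.mono _ (Set.Ioi_infinite (2*(m:ℝ)*k))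
  intro r hr
  simp only [Set.mem_Ioi] at hr
  simp only [Set.mem_setOf_eq]
  have hm1 : (1:ℝ) ≤ (m:ℝ) := by exact_mod_cast hm
  have hs0 : (0:ℝ) < r - 2*(m:ℝ)*k := by linarith
  set c : ℝ := 2 * (m:ℝ) * k - 2 * m with hc
  set a : ℝ := r - (2*(m:ℝ)*k - 2*(m:ℝ)) with ha_def
  have ha : a ≠ 0 := by rw [ha_def]; nlinarith
  have hane : a - 2*(m:ℝ) ≠ 0 := by rw [ha_def]; intro h; nlinarith
  set t : ℝ := (a - 2*(m:ℝ))⁻¹ with ht_def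
  have ht : t * (a - 2*(m:ℝ)) = 1 := inv_mul_cancel₀ hane
  set g : (Fin k × Fin m) ⊕ (Fin k × Fin m) → Fin k := Sum.elim Prod.fst Prod.fst with hg
  -- degrees
  have hdU : ∀ v : Fin k × Fin m, dU E v = (k-1)*m := by
    intro v
    unfold dU
    have hvv : E v v = 0 := by simp [hEdef]
    rw [hvv, Nat.mul_zero, Nat.add_zero, Finset.filter_ne',
      Finset.sum_erase _ (by simp [hEdef])]
    simp only [hEdef]
    exact count1 v.1
  have hdOut : ∀ v : Fin k × Fin m, dOut A v = (k-1)*m := by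
    intro v; unfold dOut; simp only [hAdef]; exact count1 v.1
  have hdIn : ∀ v : Fin k × Fin m, dIn A v = (k-1)*m := by
    intro v; unfold dIn; simp only [hAdef]; exact count1' v.1
  have hdeg : ∀ v : Fin k × Fin m, ((dU E v + dOut A v : ℕ) : ℝ) = c := by
    intro v; rw [hdU, hdOut]; push_cast [Nat.cast_sub hk]; rw [hc]; ring
  have hdeg' : ∀ v : Fin k × Fin m, ((dU E v + dIn A v : ℕ) : ℝ) = c := by
    intro v; rw [hdU, hdIn]; push_cast [Nat.cast_sub hk]; rw [hc]; ring
  -- entries of the Laplacian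
  have hAu : ∀ u v : Fin k × Fin m, Au E u v = (if u.1 = v.1 then (0:ℝ) else 1) := by
    intro u v
    by_cases huv : u = v
    · subst huv; simp [Au, hEdef]
    · simp only [Au, Matrix.of_apply, if_neg huv, hEdef]
      split_ifs <;> simp
  have hBm : ∀ u v : Fin k × Fin m, Bm A u v = (if u.1 = v.1 then (0:ℝ) else 1) := by
    intro u v
    simp only [Bm, Matrix.of_apply, hAdef]
    split_ifs <;> simp
  have hL : ∀ w w', intLap E A w w' =
      (if w = w' then c else 0) - (if g w = g w' then (0:ℝ) else 1) := by
    simp only [hg]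
    rintro (u|u) (v|v)
    · simp only [intLap, intDeg, intAdj, Matrix.sub_apply, Matrix.diagonal_apply,
        Matrix.fromBlocks_apply₁₁, Sum.elim_inl, hAu, Sum.inl.injEq, hdeg]
      congr
    · simp only [intLap, intDeg, intAdj, Matrix.sub_apply, Matrix.diagonal_apply,
        Matrix.fromBlocks_apply₁₂, Sum.elim_inl, Sum.elim_inr, hBm, hdeg]
      congr
    · simp only [intLap, intDeg, intAdj, Matrix.sub_apply, Matrix.diagonal_apply,
        Matrix.fromBlocks_apply₂₁, Matrix.transpose_apply, Sum.elim_inl, Sum.elim_inr,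
        hBm, hdeg']
      rw [show ((if v.1 = u.1 then (0:ℝ) else 1) = if u.1 = v.1 then (0:ℝ) else 1) from
        if_congr eq_comm rfl rfl]
      congr
    · simp only [intLap, intDeg, intAdj, Matrix.sub_apply, Matrix.diagonal_apply,
        Matrix.fromBlocks_apply₂₂, Sum.elim_inr, hAu, Sum.inr.injEq, hdeg']
      congr
  rw [evalCharpoly]
  set one : (Fin k × Fin m) ⊕ (Fin k × Fin m) → ℝ := fun _ => 1 with hone
  set A0 : Matrix ((Fin k × Fin m) ⊕ (Fin k × Fin m)) ((Fin k × Fin m) ⊕ (Fin k × Fin m)) ℝ :=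
    Matrix.of (fun w w' => (if w = w' then a else 0) - (if g w = g w' then (1:ℝ) else 0))
    with hA0_def
  have hZ : (Matrix.of fun w w' => (if w = w' then r else 0) - intLap E A w w')
      = A0 + Matrix.replicateCol Unit one * Matrix.replicateRow Unit one := by
    ext w w'
    simp only [Matrix.of_apply, hL, Matrix.add_apply, hA0_def, Matrix.mul_apply,
      Matrix.replicateCol_apply, Matrix.replicateRow_apply, Finset.univ_unique, Finset.sum_singleton,
      hone, mul_one]
    by_cases h1 : w = w'
    · have h2 : g w = g w' := by rw [h1]
      simp only [h1, h2, if_true, if_pos rfl]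
      rw [ha_def, hc]; ring
    · by_cases h2 : g w = g w'
      · simp [h1, h2]
      · simp [h1, h2]
  have hsum2m : ∀ w, ∑ w', (if g w = g w' then (1:ℝ) else 0) = 2*(m:ℝ) := by
    intro w
    rw [Fintype.sum_sum_type]
    simp only [hg, Sum.elim_inl, Sum.elim_inr]
    rw [count2]; ring
  have hA0row : ∀ w, ∑ w', A0 w w' = a - 2*(m:ℝ) := by
    intro w
    simp only [hA0_def, Matrix.of_apply]
    rw [Finset.sum_sub_distrib, Finset.sum_ite_eq, hsum2m w]
    simp
  have hA0col : A0 * Matrix.replicateCol Unit one = (a - 2*(m:ℝ)) • Matrix.replicateCol Unit one := by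
    ext w u
    simp only [Matrix.mul_apply, Matrix.replicateCol_apply, Matrix.smul_apply, hone, mul_one,
      smul_eq_mul]
    exact hA0row w
  have hfact : (Matrix.of fun w w' => (if w = w' then r else 0) - intLap E A w w')
      = A0 * (1 + t • (Matrix.replicateCol Unit one * Matrix.replicateRow Unit one)) := by
    rw [hZ, Matrix.mul_add, Matrix.mul_one, Matrix.mul_smul, ← Matrix.mul_assoc, hA0col,
      Matrix.smul_mul, smul_smul, ht, one_smul]
  rw [hfact, Matrix.det_mul]
  have hcr : (1 : Matrix ((Fin k × Fin m) ⊕ (Fin k × Fin m)) _ ℝ)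
        + t • (Matrix.replicateCol Unit one * Matrix.replicateRow Unit one)
      = 1 + Matrix.replicateCol Unit (t • one) * Matrix.replicateRow Unit one := by
    rw [Matrix.replicateCol_smul, Matrix.smul_mul]
  rw [hcr, Matrix.det_one_add_replicateCol_mul_replicateRow]
  have hdot : one ⬝ᵥ (t • one) = 2*(k:ℝ)*(m:ℝ)*t := by
    simp only [dotProduct, Pi.smul_apply, hone, smul_eq_mul, mul_one, one_mul,
      Finset.sum_const, Finset.card_univ, Fintype.card_sum, Fintype.card_prod,
      Fintype.card_fin, nsmul_eq_mul]
    push_cast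
    ring
  rw [hdot]
  -- determinant of the block-diagonal part
  let e : ((Fin k × Fin m) ⊕ (Fin k × Fin m)) ≃ ((Fin m ⊕ Fin m) × Fin k) :=
    { toFun := Sum.elim (fun v => (Sum.inl v.2, v.1)) (fun v => (Sum.inr v.2, v.1))
      invFun := fun pi => Sum.elim (fun b => Sum.inl (pi.2, b)) (fun b => Sum.inr (pi.2, b)) pi.1
      left_inv := by rintro (⟨i,b⟩|⟨i,b⟩) <;> rfl
      right_inv := by rintro ⟨(b|b), i⟩ <;> rfl }
  set Bk : Matrix (Fin m ⊕ Fin m) (Fin m ⊕ Fin m) ℝ :=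
    a • (1 : Matrix (Fin m ⊕ Fin m) (Fin m ⊕ Fin m) ℝ) - Matrix.of (fun _ _ => (1:ℝ))
    with hBk
  have hA0blk : A0 = (Matrix.blockDiagonal (fun _ : Fin k => Bk)).submatrix e e := by
    ext w w'
    rcases w with v|v <;> rcases w' with v'|v' <;>
      simp only [hA0_def, Matrix.of_apply, Matrix.submatrix_apply, e, Equiv.coe_fn_mk,
        Sum.elim_inl, Sum.elim_inr, Matrix.blockDiagonal_apply, hBk, Matrix.sub_apply,
        Matrix.smul_apply, Matrix.one_apply, hg, Sum.inl.injEq, Sum.inr.injEq,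
        smul_eq_mul, Prod.ext_iff] <;>
      · by_cases h1 : v.1 = v'.1 <;> by_cases h2 : v.2 = v'.2 <;>
          simp [h1, h2, Prod.ext_iff]
  haveI : Nonempty (Fin m ⊕ Fin m) := ⟨Sum.inl ⟨0, hm⟩⟩
  have hdetA0 : A0.det = (a ^ (m + m - 1) * (a - ((m:ℝ)+(m:ℝ)))) ^ k := by
    rw [hA0blk, Matrix.det_submatrix_equiv_self, Matrix.det_blockDiagonal]
    rw [Finset.prod_const, Finset.card_univ, Fintype.card_fin]
    congr 1
    rw [hBk, Jdet a ha]
    simp only [Fintype.card_sum, Fintype.card_fin]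
    push_cast
    ring
  rw [hdetA0]
  simp only [eval_mul, eval_pow, eval_sub, eval_X, eval_C]
  rw [mul_pow, ← pow_mul]
  have hexp : (m + m - 1) * k = 2*m*k - k := by
    rw [show m + m - 1 = 2*m-1 by omega, Nat.sub_mul, one_mul]
  rw [hexp]
  have hsubst : a - ((m:ℝ)+(m:ℝ)) = r - 2*(m:ℝ)*k := by rw [ha_def]; ring
  rw [hsubst]
  have hpow : ∀ x : ℝ, x ^ k = x^(k-1) * x := fun x => by
    rw [← pow_succ, Nat.sub_add_cancel hk]
  rw [hpow (r - 2*(m:ℝ)*k)]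
  have hfin : (r - 2*(m:ℝ)*k) * (1 + 2*(k:ℝ)*(m:ℝ)*t) = r := by
    have htv : t = (r - 2*(m:ℝ)*k)⁻¹ := by
      rw [ht_def, ha_def]; congr 1; ring
    rw [htv]
    field_simp
    ring
  rw [ha_def]
  linear_combination ((r - (2*(m:ℝ)*k - 2*(m:ℝ))) ^ (2*m*k - k)
    * (r - 2*(m:ℝ)*k)^(k-1)) * hfin
end

section
/- Let k, m ≥ 1 and let K^D_{k(m)} be the complete k-partite directed graph with parts of size m: vertex set Fin k × Fin m, with E ≡ 0 and A((i,a),(j,b)) = 1 when i ≠ j and 0 when i = j. Then the characteristic polynomial of 𝓘ᴸ(K^D_{k(m)}) equals (x − (2mk − 2m)) · x · (x − mk)^{k−1} · (x − (mk − 2m))^{k−1} · (x − (mk − m))^{2km−2k}; equivalently, its eigenvalues are 2mk−2m with multiplicity 1, 0 with multiplicity 1, mk with multiplicity k−1, mk−2m with multiplicity k−1, and mk−m with multiplicity 2km−2k. -/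
set_option linter.unusedSectionVars false

open Matrix Finset Polynomial

variable {V : Type*} [Fintype V] [DecidableEq V]

open Kronecker

noncomputable def Fmat (n : ℕ) [NeZero n] : Matrix (Fin n) (Fin n) ℝ :=
  Matrix.of fun x i => if i = 0 then 1 else if x = 0 then 1 else if x = i then -1 else 0

noncomputable def Gmat (n : ℕ) [NeZero n] : Matrix (Fin n) (Fin n) ℝ :=
  Matrix.of fun i x => if i = 0 then (n:ℝ)⁻¹ else (n:ℝ)⁻¹ - (if x = i then 1 else 0)

def Jmat (n : ℕ) : Matrix (Fin n) (Fin n) ℝ := Matrix.of fun _ _ => 1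

lemma Fmat_colsum (n : ℕ) [NeZero n] (j : Fin n) :
    ∑ x, Fmat n x j = if j = 0 then (n:ℝ) else 0 := by
  by_cases hj : j = 0
  · subst hj; simp [Fmat]
  · rw [Finset.sum_congr rfl (fun x _ => show Fmat n x j =
      (if x = 0 then (1:ℝ) else 0) + (if x = j then -1 else 0) by
        simp only [Fmat, Matrix.of_apply]
        split_ifs <;> simp_all)]
    rw [Finset.sum_add_distrib]
    simp [hj]

lemma Gmat_mul_Fmat (n : ℕ) [NeZero n] : Gmat n * Fmat n = 1 := by
  have hn : (n:ℝ) ≠ 0 := Nat.cast_ne_zero.mpr (NeZero.ne n)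
  ext i j
  rw [Matrix.mul_apply]
  by_cases hi : i = 0
  · subst hi
    rw [Finset.sum_congr rfl (fun x _ => show Gmat n 0 x * Fmat n x j
        = (n:ℝ)⁻¹ * Fmat n x j by simp [Gmat]),
      ← Finset.mul_sum, Fmat_colsum]
    by_cases hj : j = 0
    · subst hj; simp [inv_mul_cancel₀ hn]
    · simp [hj, Ne.symm hj, Matrix.one_apply]
  · rw [Finset.sum_congr rfl (fun x _ => show Gmat n i x * Fmat n x j
        = (n:ℝ)⁻¹ * Fmat n x j - (if x = i then Fmat n x j else 0) by
          simp only [Gmat, Matrix.of_apply, if_neg hi]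
          split_ifs <;> ring),
      Finset.sum_sub_distrib, ← Finset.mul_sum, Fmat_colsum,
      Finset.sum_ite_eq' Finset.univ i (fun x => Fmat n x j)]
    simp only [Finset.mem_univ, if_true]
    by_cases hj : j = 0
    · subst hj; simp [Fmat, inv_mul_cancel₀ hn, Matrix.one_apply, hi]
    · simp only [hj, if_false, mul_zero, zero_sub, Matrix.one_apply, Fmat, Matrix.of_apply]
      split_ifs <;> simp_all

lemma Jmat_mul_Fmat (n : ℕ) [NeZero n] :
    Jmat n * Fmat n = Fmat n * Matrix.diagonal (fun j => if j = 0 then (n:ℝ) else 0) := by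
  ext x j
  rw [Matrix.mul_apply, Matrix.mul_diagonal]
  rw [Finset.sum_congr rfl (fun y _ => show Jmat n x y * Fmat n y j = Fmat n y j by
    simp [Jmat]), Fmat_colsum]
  by_cases hj : j = 0
  · subst hj; simp [Fmat]
  · simp [hj]

lemma JmatI_mul_Fmat (n : ℕ) [NeZero n] :
    (Jmat n - 1) * Fmat n = Fmat n * Matrix.diagonal (fun j => if j = 0 then (n:ℝ) - 1 else -1) := by
  have : (Matrix.diagonal (fun j : Fin n => if j = 0 then (n:ℝ) - 1 else -1))
      = Matrix.diagonal (fun j : Fin n => if j = 0 then (n:ℝ) else 0) - 1 := by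
    ext a b
    by_cases hab : a = b
    · subst hab
      simp only [Matrix.sub_apply, Matrix.diagonal_apply_eq, Matrix.one_apply_eq]
      split_ifs <;> ring
    · simp [Matrix.diagonal_apply_ne _ hab, Matrix.one_apply_ne hab]
  rw [this, Matrix.mul_sub, Matrix.mul_one, Matrix.sub_mul, Matrix.one_mul, Jmat_mul_Fmat]

open Kronecker in
lemma test_kron (k m : ℕ) [NeZero k] [NeZero m] :
    (Gmat k ⊗ₖ Gmat m) * (Fmat k ⊗ₖ Fmat m) = 1 := by
  rw [← Matrix.mul_kronecker_mul, Gmat_mul_Fmat, Gmat_mul_Fmat, Matrix.one_kronecker_one]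

lemma charpoly_similar {n : Type*} [Fintype n] [DecidableEq n] (P Q M : Matrix n n ℝ)
    (h : P * Q = 1) : (P * M * Q).charpoly = M.charpoly := by
  have h2 : (P.map (C : ℝ →+* ℝ[X])) * (Q.map (C : ℝ →+* ℝ[X])) = 1 := by
    rw [← Matrix.map_mul, h, Matrix.map_one _ (map_zero C) (map_one C)]
  have hc : charmatrix (P * M * Q)
      = (P.map (C : ℝ →+* ℝ[X])) * charmatrix M * (Q.map (C : ℝ →+* ℝ[X])) := by
    unfold charmatrix
    rw [Matrix.mul_sub, Matrix.sub_mul]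
    congr 1
    · rw [Matrix.scalar_apply, ← Matrix.smul_one_eq_diagonal, Matrix.mul_smul,
        Matrix.mul_one, Matrix.smul_mul, h2, Matrix.smul_one_eq_diagonal]
    · rw [RingHom.mapMatrix_apply, RingHom.mapMatrix_apply, Matrix.map_mul, Matrix.map_mul]
  unfold Matrix.charpoly
  rw [hc, Matrix.det_mul, Matrix.det_mul, mul_comm, ← mul_assoc, mul_comm (Q.map _).det,
    ← Matrix.det_mul, h2, Matrix.det_one, one_mul]

lemma charpoly_diagonal {n : Type*} [Fintype n] [DecidableEq n] (d : n → ℝ) :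
    (Matrix.diagonal d).charpoly = ∏ i, (X - C (d i)) := by
  have : charmatrix (Matrix.diagonal d) = Matrix.diagonal (fun i => X - C (d i)) := by
    ext a b
    by_cases hab : a = b
    · subst hab; simp
    · simp [Matrix.diagonal_apply_ne _ hab, charmatrix_apply_ne _ _ _ hab]
  rw [Matrix.charpoly, this, Matrix.det_diagonal]

lemma prod_block (k m : ℕ) [NeZero k] [NeZero m] (c t : ℝ) :
    (∏ p : Fin k × Fin m, (X - C (c + t * ((if p.1 = 0 then (k:ℝ) - 1 else -1) *
        (if p.2 = 0 then (m:ℝ) else 0))))) =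
      (X - C (c + t * ((k:ℝ) - 1) * m)) * (X - C (c - t * m)) ^ (k - 1) *
        (X - C c) ^ (k * (m - 1)) := by
  have hk : 1 ≤ k := Nat.one_le_iff_ne_zero.mpr (NeZero.ne k)
  have hm : 1 ≤ m := Nat.one_le_iff_ne_zero.mpr (NeZero.ne m)
  rw [Fintype.prod_prod_type]
  have inner : ∀ i : Fin k, (∏ b : Fin m, (X - C (c + t * ((if i = 0 then (k:ℝ) - 1 else -1) *
      (if b = 0 then (m:ℝ) else 0))))) =
      (X - C (c + t * (if i = 0 then (k:ℝ) - 1 else -1) * m)) * (X - C c) ^ (m - 1) := by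
    intro i
    rw [← Finset.mul_prod_erase Finset.univ _ (Finset.mem_univ (0 : Fin m))]
    have h2 : (∏ b ∈ Finset.univ.erase (0 : Fin m), (X - C (c + t * ((if i = 0 then (k:ℝ) - 1
        else -1) * (if b = 0 then (m:ℝ) else 0))))) =
        ∏ _b ∈ Finset.univ.erase (0 : Fin m), (X - C c) := by
      refine Finset.prod_congr rfl fun b hb => ?_
      rw [if_neg (Finset.ne_of_mem_erase hb)]
      ring_nf
    rw [h2, Finset.prod_const, Finset.card_erase_of_mem (Finset.mem_univ _), Finset.card_univ,
      Fintype.card_fin]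
    congr 2
    rw [if_pos rfl]
    ring
  rw [Finset.prod_congr rfl (fun i _ => inner i),
    ← Finset.mul_prod_erase Finset.univ _ (Finset.mem_univ (0 : Fin k))]
  have h3 : (∏ i ∈ Finset.univ.erase (0 : Fin k), ((X - C (c + t * (if i = 0 then (k:ℝ) - 1
      else -1) * m)) * (X - C c) ^ (m - 1))) =
      ∏ _i ∈ Finset.univ.erase (0 : Fin k), ((X - C (c - t * m)) * (X - C c) ^ (m - 1)) := by
    refine Finset.prod_congr rfl fun i hi => ?_
    rw [if_neg (Finset.ne_of_mem_erase hi)]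
    ring_nf
  rw [h3, Finset.prod_const, Finset.card_erase_of_mem (Finset.mem_univ _), Finset.card_univ,
    Fintype.card_fin, if_pos rfl, mul_pow]
  have hexp : (m - 1) + (m - 1) * (k - 1) = k * (m - 1) := by
    obtain ⟨k', rfl⟩ : ∃ k', k = k' + 1 := ⟨k - 1, by omega⟩
    obtain ⟨m', rfl⟩ : ∃ m', m = m' + 1 := ⟨m - 1, by omega⟩
    simp only [Nat.add_sub_cancel]
    ring
  rw [show (X - C (c + t * ((k:ℝ) - 1) * m)) * (X - C c) ^ (m - 1) *
      ((X - C (c - t * m)) ^ (k - 1) * ((X - C c) ^ (m - 1)) ^ (k - 1)) =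
      (X - C (c + t * ((k:ℝ) - 1) * m)) * (X - C (c - t * m)) ^ (k - 1) *
      ((X - C c) ^ (m - 1) * (X - C c) ^ ((m - 1) * (k - 1))) by rw [← pow_mul]; ring,
    ← pow_add, hexp]

/-- the characteristic polynomial of `𝓘ᴸ(K^D_{k(m)})` is
`(x − (2mk−2m)) · x · (x − mk)^(k−1) · (x − (mk−2m))^(k−1) · (x − (mk−m))^(2km−2k)`. -/
theorem stmt6 (k m : ℕ) (hk : 1 ≤ k) (hm : 1 ≤ m)
    (E A : Fin k × Fin m → Fin k × Fin m → ℕ)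
    (hEdef : ∀ p q, E p q = 0)
    (hAdef : ∀ p q, A p q = if p.1 = q.1 then 0 else 1) :
    (intLap E A).charpoly =
      (Polynomial.X - Polynomial.C (2 * (m : ℝ) * k - 2 * m)) * Polynomial.X *
        (Polynomial.X - Polynomial.C ((m : ℝ) * k)) ^ (k - 1) *
        (Polynomial.X - Polynomial.C ((m : ℝ) * k - 2 * m)) ^ (k - 1) *
        (Polynomial.X - Polynomial.C ((m : ℝ) * k - m)) ^ (2 * k * m - 2 * k) := by
  haveI : NeZero k := ⟨by omega⟩
  haveI : NeZero m := ⟨by omega⟩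
  set c : ℝ := (m : ℝ) * k - m with hc
  set μ : Fin k × Fin m → ℝ :=
    fun p => (if p.1 = 0 then (k:ℝ) - 1 else -1) * (if p.2 = 0 then (m:ℝ) else 0) with hμ
  set Bk : Matrix (Fin k × Fin m) (Fin k × Fin m) ℝ := (Jmat k - 1) ⊗ₖ Jmat m with hBkdef
  have hBkapp : ∀ p q : Fin k × Fin m, Bk p q = if p.1 = q.1 then 0 else 1 := by
    intro p q
    show ((Jmat k - 1) p.1 q.1) * (Jmat m p.2 q.2) = _
    simp only [Jmat, Matrix.sub_apply, Matrix.of_apply, Matrix.one_apply]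
    split_ifs <;> ring
  -- step 1 : degree sums
  have hdU : ∀ p, dU E p = 0 := by intro p; simp [dU, hEdef]
  have hOut : ∀ p : Fin k × Fin m, ((dOut A p : ℕ) : ℝ) = c := by
    intro p
    have : ((dOut A p : ℕ) : ℝ) = ∑ u : Fin k × Fin m, ((A p u : ℕ) : ℝ) := by
      simp [dOut]
    rw [this, Finset.sum_congr rfl (fun u _ => show ((A p u : ℕ) : ℝ)
        = 1 - (if p.1 = u.1 then (1:ℝ) else 0) by rw [hAdef]; split_ifs <;> norm_num),
      Finset.sum_sub_distrib, Finset.sum_const, Finset.card_univ, Fintype.sum_prod_type]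
    have h4 : (∑ x : Fin k, ∑ _y : Fin m, (if p.1 = x then (1:ℝ) else 0)) = (m:ℝ) := by
      simp [Finset.sum_ite_eq, Finset.sum_const, smul_ite]
    rw [h4]
    simp [Fintype.card_prod, hc]
    ring
  have hIn : ∀ p : Fin k × Fin m, ((dIn A p : ℕ) : ℝ) = c := by
    intro p
    have : ((dIn A p : ℕ) : ℝ) = ∑ u : Fin k × Fin m, ((A u p : ℕ) : ℝ) := by
      simp [dIn]
    rw [this, Finset.sum_congr rfl (fun u _ => show ((A u p : ℕ) : ℝ)
        = 1 - (if u.1 = p.1 then (1:ℝ) else 0) by rw [hAdef]; split_ifs <;> norm_num),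
      Finset.sum_sub_distrib, Finset.sum_const, Finset.card_univ, Fintype.sum_prod_type]
    have h4 : (∑ x : Fin k, ∑ _y : Fin m, (if x = p.1 then (1:ℝ) else 0)) = (m:ℝ) := by
      simp [Finset.sum_ite_eq', Finset.sum_const, smul_ite]
    rw [h4]
    simp [Fintype.card_prod, hc]
    ring
  -- step 2 : block form of the Laplacian
  have hAu : Au E = 0 := by
    ext u v; simp [Au, hEdef]
  have hB : Bm A = Bk := by
    ext p q; rw [hBkapp]; simp only [Bm, Matrix.of_apply, hAdef]; split_ifs <;> norm_num
  have hBt : Bkᵀ = Bk := by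
    ext p q
    rw [Matrix.transpose_apply, hBkapp, hBkapp]
    by_cases h : p.1 = q.1
    · rw [if_pos h, if_pos h.symm]
    · rw [if_neg h, if_neg (fun hh => h hh.symm)]
  have hLap : intLap E A = Matrix.fromBlocks (c • 1) (-Bk) (-Bk) (c • 1) := by
    have hdeg : intDeg E A = Matrix.fromBlocks (c • 1) 0 0 (c • 1) := by
      have e1 : intDeg E A = Matrix.diagonal
          (Sum.elim (fun _ : Fin k × Fin m => c) (fun _ : Fin k × Fin m => c)) := by
        unfold intDeg
        ext s t
        rcases eq_or_ne s t with rfl | hst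
        · cases s with
          | inl p =>
            simp only [Matrix.diagonal_apply_eq, Sum.elim_inl]
            simpa [hdU p] using hOut p
          | inr p =>
            simp only [Matrix.diagonal_apply_eq, Sum.elim_inr]
            simpa [hdU p] using hIn p
        · simp [Matrix.diagonal_apply_ne _ hst]
      rw [e1, ← Matrix.fromBlocks_diagonal, ← Matrix.smul_one_eq_diagonal c]
    have hadj : intAdj E A = Matrix.fromBlocks 0 Bk Bk 0 := by
      unfold intAdj; rw [hAu, hB, hBt]
    rw [intLap, hdeg, hadj, sub_eq_add_neg, Matrix.fromBlocks_neg, Matrix.fromBlocks_add]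
    simp
  -- step 3 : eigenvector matrices
  set P0 : Matrix (Fin k × Fin m) (Fin k × Fin m) ℝ := Fmat k ⊗ₖ Fmat m with hP0
  set Q0 : Matrix (Fin k × Fin m) (Fin k × Fin m) ℝ := Gmat k ⊗ₖ Gmat m with hQ0
  have hQP : Q0 * P0 = 1 := by
    rw [hP0, hQ0, ← Matrix.mul_kronecker_mul, Gmat_mul_Fmat, Gmat_mul_Fmat,
      Matrix.one_kronecker_one]
  have hPQ : P0 * Q0 = 1 := mul_eq_one_comm.mp hQP
  have hBP : Bk * P0 = P0 * Matrix.diagonal μ := by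
    rw [hP0, hBkdef, ← Matrix.mul_kronecker_mul, JmatI_mul_Fmat, Jmat_mul_Fmat,
      Matrix.mul_kronecker_mul, Matrix.diagonal_kronecker_diagonal]
  set P : Matrix ((Fin k × Fin m) ⊕ (Fin k × Fin m)) _ ℝ :=
    Matrix.fromBlocks P0 P0 P0 (-P0) with hP
  set Pinv : Matrix ((Fin k × Fin m) ⊕ (Fin k × Fin m)) _ ℝ :=
    (2:ℝ)⁻¹ • Matrix.fromBlocks Q0 Q0 Q0 (-Q0) with hPinv
  have hPPinv : P * Pinv = 1 := by
    rw [hP, hPinv, Matrix.mul_smul, Matrix.fromBlocks_multiply]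
    simp only [Matrix.mul_neg, Matrix.neg_mul, hPQ, neg_neg]
    rw [show ((1:Matrix (Fin k × Fin m) (Fin k × Fin m) ℝ) + -1) = 0 from add_neg_cancel 1,
      show ((1:Matrix (Fin k × Fin m) (Fin k × Fin m) ℝ) + 1) = (2:ℝ) • 1 from (two_smul ℝ _).symm,
      Matrix.fromBlocks_smul, smul_smul]
    norm_num [Matrix.fromBlocks_one]
  -- step 4 : similarity
  set Dg : Matrix ((Fin k × Fin m) ⊕ (Fin k × Fin m)) _ ℝ :=
    Matrix.diagonal (Sum.elim (fun p => c - μ p) (fun p => c + μ p)) with hDg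
  have hdiag1 : Matrix.diagonal (fun p : Fin k × Fin m => c - μ p)
      = c • 1 - Matrix.diagonal μ := by
    ext a b
    rcases eq_or_ne a b with rfl | h
    · simp [Matrix.smul_apply, Matrix.one_apply_eq]
    · simp [Matrix.diagonal_apply_ne _ h, Matrix.one_apply_ne h]
  have hdiag2 : Matrix.diagonal (fun p : Fin k × Fin m => c + μ p)
      = c • 1 + Matrix.diagonal μ := by
    ext a b
    rcases eq_or_ne a b with rfl | h
    · simp [Matrix.smul_apply, Matrix.one_apply_eq]
    · simp [Matrix.diagonal_apply_ne _ h, Matrix.one_apply_ne h]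
  have hLP : intLap E A * P = P * Dg := by
    rw [hLap, hP, hDg, ← Matrix.fromBlocks_diagonal, Matrix.fromBlocks_multiply,
      Matrix.fromBlocks_multiply, hdiag1, hdiag2, Matrix.fromBlocks_inj]
    refine ⟨?_, ?_, ?_, ?_⟩ <;>
      simp only [Matrix.neg_mul, Matrix.mul_neg, Matrix.smul_mul, Matrix.one_mul,
        Matrix.mul_sub, Matrix.mul_add, Matrix.mul_smul, Matrix.mul_one, Matrix.mul_zero,
        Matrix.zero_mul, add_zero, zero_add, hBP, neg_neg] <;>
      module
  have hsim : intLap E A = P * Dg * Pinv := by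
    calc intLap E A = intLap E A * (P * Pinv) := by rw [hPPinv, Matrix.mul_one]
    _ = (intLap E A * P) * Pinv := by rw [Matrix.mul_assoc]
    _ = P * Dg * Pinv := by rw [hLP]
  rw [hsim, charpoly_similar _ _ _ hPPinv, hDg, _root_.charpoly_diagonal, Fintype.prod_sum_type]
  simp only [Sum.elim_inl, Sum.elim_inr]
  have hb1 := prod_block k m c (-1)
  have hb2 := prod_block k m c 1
  rw [show c + (-1) * ((k:ℝ) - 1) * (m:ℝ) = 0 from by rw [hc]; ring,
    show c - (-1) * (m:ℝ) = (m:ℝ) * (k:ℝ) from by rw [hc]; ring,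
    map_zero, sub_zero] at hb1
  rw [show c + 1 * ((k:ℝ) - 1) * (m:ℝ) = 2 * (m:ℝ) * (k:ℝ) - 2 * (m:ℝ) from by rw [hc]; ring,
    show c - 1 * (m:ℝ) = (m:ℝ) * (k:ℝ) - 2 * (m:ℝ) from by rw [hc]; ring] at hb2
  have hswap1 : (∏ p : Fin k × Fin m, (X - C (c - μ p)))
      = ∏ p : Fin k × Fin m, (X - C (c + (-1) * ((if p.1 = 0 then (k:ℝ) - 1 else -1) *
          (if p.2 = 0 then (m:ℝ) else 0)))) :=
    Finset.prod_congr rfl fun p _ => by simp only [hμ]; congr 2; ring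
  have hswap2 : (∏ p : Fin k × Fin m, (X - C (c + μ p)))
      = ∏ p : Fin k × Fin m, (X - C (c + 1 * ((if p.1 = 0 then (k:ℝ) - 1 else -1) *
          (if p.2 = 0 then (m:ℝ) else 0)))) :=
    Finset.prod_congr rfl fun p _ => by simp only [hμ]; congr 2; ring
  have hE2 : 2 * k * m - 2 * k = k * (m - 1) + k * (m - 1) := by
    obtain ⟨m', rfl⟩ : ∃ m', m = m' + 1 := ⟨m - 1, by omega⟩
    rw [Nat.add_sub_cancel, show 2 * k * (m' + 1) = (k * m' + k * m') + 2 * k from by ring,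
      Nat.add_sub_cancel]
  rw [hswap1, hswap2, hb1, hb2, hE2, pow_add]
  ring
end

section
/- Let G be a simple mixed graph on n vertices and let d₁ ≥ d₂ ≥ … ≥ d₂ₙ be the non-increasing rearrangement of the 2n numbers consisting of d v + d⁺ v and d v + d⁻ v for all vertices v (with multiplicity). Then for every k = 1, …, 2n one has Σ_{i=1}^{k} ν_i(G) ≥ Σ_{i=1}^{k} d_i, with equality when k = 2n. -/
set_option linter.unusedSectionVars false

open Matrix Finset Polynomial

variable {V : Type*} [Fintype V] [DecidableEq V]

/-- the `2n` integrated degrees of the mixed graph, as a tuple indexed by `Fin (n+n)` -/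
noncomputable def degT {n : ℕ} (E A : Fin n → Fin n → ℕ) : Fin (n + n) → ℝ :=
  fun i => Sum.elim (fun v => ((dU E v + dOut A v : ℕ) : ℝ))
    (fun v => ((dU E v + dIn A v : ℕ) : ℝ)) (finSumFinEquiv.symm i)


/-! ### Auxiliary lemmas for Schur majorization -/

lemma sortDesc_eq_perm {N : ℕ} (f : Fin N → ℝ) (i : Fin N) :
    sortDesc f i = f ((Fin.revPerm.trans (Tuple.sort f)) i) := rfl

lemma sortDesc_antitone {N : ℕ} (f : Fin N → ℝ) : Antitone (sortDesc f) := by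
  intro i j hij
  exact Tuple.monotone_sort f (Fin.rev_le_rev.mpr hij)

lemma sum_sortDesc {N : ℕ} (f : Fin N → ℝ) : ∑ i, sortDesc f i = ∑ i, f i :=
  Equiv.sum_comp (Fin.revPerm.trans (Tuple.sort f)) f

/-- The set of positions of the `k` largest values of `f`. -/
noncomputable def topSet {N : ℕ} (f : Fin N → ℝ) (k : ℕ) : Finset (Fin N) :=
  (Finset.univ.filter (fun i : Fin N => (i : ℕ) < k)).image (Fin.revPerm.trans (Tuple.sort f))

lemma filter_lt_card {N k : ℕ} (hk : k ≤ N) :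
    (Finset.univ.filter (fun i : Fin N => (i : ℕ) < k)).card = k := by
  have h : Finset.univ.filter (fun i : Fin N => (i : ℕ) < k)
      = Finset.map (Fin.castLEEmb hk) Finset.univ := by
    ext i
    simp only [Finset.mem_filter, Finset.mem_univ, true_and, Finset.mem_map,
      Fin.castLEEmb_apply]
    constructor
    · intro h; exact ⟨⟨i, h⟩, by ext; rfl⟩
    · rintro ⟨a, rfl⟩; exact a.isLt
  rw [h, Finset.card_map, Finset.card_univ, Fintype.card_fin]

lemma topSet_card {N k : ℕ} (f : Fin N → ℝ) (hk : k ≤ N) : (topSet f k).card = k := by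
  rw [topSet, Finset.card_image_of_injective _ (Fin.revPerm.trans (Tuple.sort f)).injective,
    filter_lt_card hk]

lemma sum_topSet {N k : ℕ} (f : Fin N → ℝ) :
    ∑ j ∈ topSet f k, f j
      = ∑ i ∈ Finset.univ.filter (fun i : Fin N => (i : ℕ) < k), sortDesc f i := by
  rw [topSet, Finset.sum_image
    (fun a _ b _ h => (Fin.revPerm.trans (Tuple.sort f)).injective h)]
  rfl

lemma topSet_top {N k : ℕ} (f : Fin N → ℝ) {j j' : Fin N}
    (hj : j ∈ topSet f k) (hj' : j' ∉ topSet f k) : f j' ≤ f j := by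
  rw [topSet, Finset.mem_image] at hj
  obtain ⟨i, hi, rfl⟩ := hj
  rw [Finset.mem_filter] at hi
  set σ := Fin.revPerm.trans (Tuple.sort f) with hσ
  set i' := σ.symm j' with hi'
  have hj'' : j' = σ i' := by rw [hi', Equiv.apply_symm_apply]
  have hni : ¬ ((i' : ℕ) < k) := by
    intro hlt
    exact hj' (Finset.mem_image.mpr ⟨i', Finset.mem_filter.mpr ⟨Finset.mem_univ _, hlt⟩,
      hj''.symm⟩)
  have hle : i ≤ i' := by
    have := hi.2
    omega
  rw [hj'']
  calc f (σ i') = sortDesc f i' := (sortDesc_eq_perm f i').symm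
    _ ≤ sortDesc f i := sortDesc_antitone f hle
    _ = f (σ i) := sortDesc_eq_perm f i

lemma sum_mul_le_topsum {N : ℕ} (lam c : Fin N → ℝ) (hc0 : ∀ j, 0 ≤ c j)
    (hc1 : ∀ j, c j ≤ 1) (T : Finset (Fin N)) (hsum : ∑ j, c j = T.card)
    (htop : ∀ j ∈ T, ∀ j' ∉ T, lam j' ≤ lam j) :
    ∑ j, c j * lam j ≤ ∑ j ∈ T, lam j := by
  rcases T.eq_empty_or_nonempty with h | h
  · subst h
    simp only [Finset.card_empty, Nat.cast_zero] at hsum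
    have hz : ∀ j ∈ Finset.univ, c j = 0 :=
      (Finset.sum_eq_zero_iff_of_nonneg (fun j _ => hc0 j)).mp hsum
    have hcz : ∀ j : Fin N, c j = 0 := fun j => hz j (Finset.mem_univ j)
    simp [hcz]
  · set t := T.inf' h lam with ht
    set ind : Fin N → ℝ := fun j => if j ∈ T then (1 : ℝ) else 0 with hind
    have key : ∀ j, (c j - ind j) * (lam j - t) ≤ 0 := by
      intro j
      by_cases hjT : j ∈ T
      · apply mul_nonpos_of_nonpos_of_nonneg
        · have := hc1 j; simp only [hind, hjT, if_pos]; linarith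
        · have := Finset.inf'_le lam hjT; linarith
      · apply mul_nonpos_of_nonneg_of_nonpos
        · simp only [hind, hjT, if_neg, not_false_iff]; simpa using hc0 j
        · have : lam j ≤ t := Finset.le_inf' h lam (fun b hb => htop b hb j hjT)
          linarith
    have hindsum : ∑ j, ind j = (T.card : ℝ) := by
      simp [hind, Finset.sum_ite_mem]
    have hindlam : ∑ j, ind j * lam j = ∑ j ∈ T, lam j := by
      simp [hind, ite_mul, Finset.sum_ite_mem]
    have hexp : ∑ j, (c j - ind j) * (lam j - t)
        = (∑ j, c j * lam j) - (∑ j, ind j * lam j)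
          - t * (∑ j, c j) + t * (∑ j, ind j) := by
      rw [Finset.mul_sum, Finset.mul_sum, ← Finset.sum_sub_distrib,
        ← Finset.sum_sub_distrib, ← Finset.sum_add_distrib]
      exact Finset.sum_congr rfl (fun j _ => by ring)
    have hnp : ∑ j, (c j - ind j) * (lam j - t) ≤ 0 :=
      Finset.sum_nonpos (fun j _ => key j)
    rw [hexp, hindlam, hsum, hindsum] at hnp
    linarith

lemma diag_eq_sum {ι : Type*} [Fintype ι] [DecidableEq ι] {M : Matrix ι ι ℝ}
    (hM : M.IsHermitian) (i : ι) :
    M i i = ∑ j, hM.eigenvalues j * ((hM.eigenvectorUnitary : Matrix ι ι ℝ) i j) ^ 2 := by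
  conv_lhs => rw [hM.spectral_theorem, Unitary.conjStarAlgAut_apply]
  rw [Matrix.mul_apply]
  refine Finset.sum_congr rfl (fun j _ => ?_)
  rw [Matrix.mul_diagonal]
  simp [Matrix.star_apply, sq]
  ring

lemma col_norm {ι : Type*} [Fintype ι] [DecidableEq ι] {M : Matrix ι ι ℝ}
    (hM : M.IsHermitian) (j : ι) :
    ∑ i, ((hM.eigenvectorUnitary : Matrix ι ι ℝ) i j) ^ 2 = 1 := by
  have h1 : (star (hM.eigenvectorUnitary : Matrix ι ι ℝ))
      * (hM.eigenvectorUnitary : Matrix ι ι ℝ) = 1 := hM.eigenvectorUnitary.2.1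
  have h2 := congrFun (congrFun (congrArg (fun M : Matrix ι ι ℝ => fun a b => M a b) h1) j) j
  simp only [Matrix.mul_apply, Matrix.star_apply, Matrix.one_apply_eq] at h2
  rw [← h2]
  refine Finset.sum_congr rfl (fun i _ => ?_)
  simp [sq]

lemma row_norm {ι : Type*} [Fintype ι] [DecidableEq ι] {M : Matrix ι ι ℝ}
    (hM : M.IsHermitian) (i : ι) :
    ∑ j, ((hM.eigenvectorUnitary : Matrix ι ι ℝ) i j) ^ 2 = 1 := by
  have h1 : (hM.eigenvectorUnitary : Matrix ι ι ℝ)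
      * (star (hM.eigenvectorUnitary : Matrix ι ι ℝ)) = 1 := hM.eigenvectorUnitary.2.2
  have h2 := congrFun (congrFun (congrArg (fun M : Matrix ι ι ℝ => fun a b => M a b) h1) i) i
  simp only [Matrix.mul_apply, Matrix.star_apply, Matrix.one_apply_eq] at h2
  rw [← h2]
  refine Finset.sum_congr rfl (fun j _ => ?_)
  simp [sq]

lemma trace_eq_sum_eig {ι : Type*} [Fintype ι] [DecidableEq ι] {M : Matrix ι ι ℝ}
    (hM : M.IsHermitian) :
    ∑ x, M x x = ∑ j, hM.eigenvalues j := by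
  calc ∑ x, M x x
      = ∑ x, ∑ j, hM.eigenvalues j * ((hM.eigenvectorUnitary : Matrix ι ι ℝ) x j) ^ 2 :=
        Finset.sum_congr rfl (fun x _ => diag_eq_sum hM x)
    _ = ∑ j, hM.eigenvalues j * ∑ x, ((hM.eigenvectorUnitary : Matrix ι ι ℝ) x j) ^ 2 := by
        rw [Finset.sum_comm]
        exact Finset.sum_congr rfl (fun j _ => by rw [Finset.mul_sum])
    _ = ∑ j, hM.eigenvalues j := by
        refine Finset.sum_congr rfl (fun j _ => ?_)
        rw [col_norm hM j, mul_one]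

lemma schur_key {N : ℕ} {ι : Type*} [Fintype ι] [DecidableEq ι] (e : Fin N ≃ ι)
    {M : Matrix ι ι ℝ} (hM : M.IsHermitian) (k : ℕ) (hk : k ≤ N)
    (S : Finset (Fin N)) (hS : S.card = k) :
    ∑ i ∈ S, M (e i) (e i) ≤
      ∑ i ∈ Finset.univ.filter (fun i : Fin N => (i : ℕ) < k),
        sortDesc (fun i => hM.eigenvalues (e i)) i := by
  set lam : Fin N → ℝ := fun i => hM.eigenvalues (e i) with hlam
  set U : Matrix ι ι ℝ := (hM.eigenvectorUnitary : Matrix ι ι ℝ) with hU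
  set c : Fin N → ℝ := fun j => ∑ i ∈ S, (U (e i) (e j)) ^ 2 with hc
  have hc0 : ∀ j, 0 ≤ c j := fun j => Finset.sum_nonneg (fun i _ => sq_nonneg _)
  have hc1 : ∀ j, c j ≤ 1 := by
    intro j
    calc c j ≤ ∑ i : Fin N, (U (e i) (e j)) ^ 2 :=
          Finset.sum_le_sum_of_subset_of_nonneg (Finset.subset_univ S)
            (fun i _ _ => sq_nonneg _)
      _ = ∑ x : ι, (U x (e j)) ^ 2 := Fintype.sum_equiv e _ _ (fun i => rfl)
      _ = 1 := col_norm hM (e j)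
  have hT := topSet_card lam hk
  have hcsum : ∑ j, c j = ((topSet lam k).card : ℝ) := by
    rw [hT, ← hS]
    calc ∑ j, c j = ∑ i ∈ S, ∑ j : Fin N, (U (e i) (e j)) ^ 2 := Finset.sum_comm
      _ = ∑ i ∈ S, (1 : ℝ) := by
          refine Finset.sum_congr rfl (fun i _ => ?_)
          calc ∑ j : Fin N, (U (e i) (e j)) ^ 2
              = ∑ x : ι, (U (e i) x) ^ 2 := Fintype.sum_equiv e _ _ (fun j => rfl)
            _ = 1 := row_norm hM (e i)
      _ = (S.card : ℝ) := by simp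
  have hdiag : ∑ i ∈ S, M (e i) (e i) = ∑ j, c j * lam j := by
    calc ∑ i ∈ S, M (e i) (e i)
        = ∑ i ∈ S, ∑ x : ι, hM.eigenvalues x * (U (e i) x) ^ 2 :=
          Finset.sum_congr rfl (fun i _ => diag_eq_sum hM (e i))
      _ = ∑ i ∈ S, ∑ j : Fin N, lam j * (U (e i) (e j)) ^ 2 :=
          Finset.sum_congr rfl (fun i _ => (Fintype.sum_equiv e _ _ (fun j => rfl)).symm)
      _ = ∑ j : Fin N, ∑ i ∈ S, lam j * (U (e i) (e j)) ^ 2 := Finset.sum_comm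
      _ = ∑ j, c j * lam j := by
          refine Finset.sum_congr rfl (fun j _ => ?_)
          simp only [hc, Finset.sum_mul]
          exact Finset.sum_congr rfl (fun i _ => mul_comm _ _)
  rw [hdiag, ← sum_topSet lam]
  exact sum_mul_le_topsum lam c hc0 hc1 (topSet lam k) hcsum
    (fun j hj j' hj' => topSet_top lam hj hj')

lemma intLap_diag_simple {n : ℕ} (E A : Fin n → Fin n → ℕ) (hS : IsSimple E A)
    (x : Fin n ⊕ Fin n) :
    intLap E A x x = Sum.elim (fun v => ((dU E v + dOut A v : ℕ) : ℝ))
      (fun v => ((dU E v + dIn A v : ℕ) : ℝ)) x := by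
  obtain ⟨hE1, hA1, hEd, hAd⟩ := hS
  cases x with
  | inl v => simp [intLap, intDeg, intAdj, Au, hEd v]
  | inr v => simp [intLap, intDeg, intAdj, Au, hEd v]

/-- with `d₁ ≥ … ≥ d₂ₙ` the non-increasing rearrangement of the integrated
degrees, `Σ_{i=1}^{k} ν_i(G) ≥ Σ_{i=1}^{k} d_i` for `k = 1,…,2n`, with equality at `k = 2n`. -/
theorem stmt8 (n : ℕ) (E A : Fin n → Fin n → ℕ) (hE : ∀ u v, E u v = E v u)
    (hS : IsSimple E A) :
    (∀ k : ℕ, 1 ≤ k → k ≤ n + n →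
      ∑ i ∈ Finset.univ.filter (fun i : Fin (n + n) => (i : ℕ) < k), sortDesc (degT E A) i ≤
        ∑ i ∈ Finset.univ.filter (fun i : Fin (n + n) => (i : ℕ) < k), nuT E A hE i) ∧
    ∑ i, nuT E A hE i = ∑ i, sortDesc (degT E A) i := by
  set e : Fin (n + n) ≃ (Fin n ⊕ Fin n) := finSumFinEquiv.symm with he
  have hM := intLap_isHermitian E A hE
  have hdeg : ∀ i : Fin (n + n), degT E A i = intLap E A (e i) (e i) := fun i =>
    (intLap_diag_simple E A hS (e i)).symm
  constructor
  · intro k hk1 hk2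
    have hScard : (topSet (degT E A) k).card = k := topSet_card _ hk2
    calc ∑ i ∈ Finset.univ.filter (fun i : Fin (n + n) => (i : ℕ) < k),
          sortDesc (degT E A) i
        = ∑ j ∈ topSet (degT E A) k, degT E A j := (sum_topSet _).symm
      _ = ∑ j ∈ topSet (degT E A) k, intLap E A (e j) (e j) :=
          Finset.sum_congr rfl (fun j _ => hdeg j)
      _ ≤ ∑ i ∈ Finset.univ.filter (fun i : Fin (n + n) => (i : ℕ) < k),
          sortDesc (fun i => hM.eigenvalues (e i)) i :=
          schur_key e hM k hk2 _ hScard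
      _ = ∑ i ∈ Finset.univ.filter (fun i : Fin (n + n) => (i : ℕ) < k),
          nuT E A hE i := rfl
  · calc ∑ i, nuT E A hE i = ∑ i, hM.eigenvalues (e i) := sum_sortDesc _
      _ = ∑ x, hM.eigenvalues x := Fintype.sum_equiv e _ _ (fun i => rfl)
      _ = ∑ x, intLap E A x x := (trace_eq_sum_eig hM).symm
      _ = ∑ i, intLap E A (e i) (e i) := (Fintype.sum_equiv e _ _ (fun i => rfl)).symm
      _ = ∑ i, degT E A i := Finset.sum_congr rfl (fun i _ => (hdeg i).symm)
      _ = ∑ i, sortDesc (degT E A) i := (sum_sortDesc _).symm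
end

section
/- For every simple mixed graph G on n ≥ 1 vertices, ν₁(G) ≤ 2·μ₁ + max_v (d⁺ v) + max_v (d⁻ v), where μ₁ is the largest eigenvalue of the Laplacian matrix L(Gᵤ) = diag(d) − Aᵤ of the undirected part of G. -/
set_option linter.unusedSectionVars false

open Matrix Finset Polynomial

variable {V : Type*} [Fintype V] [DecidableEq V]

/-- Laplacian matrix of the undirected part `Gᵤ`. -/
def lapU (E : V → V → ℕ) : Matrix V V ℝ :=
  Matrix.diagonal (fun v => ((dU E v : ℕ) : ℝ)) - Au E

lemma lapU_isHermitian (E : V → V → ℕ) (hE : ∀ u v, E u v = E v u) :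
    (lapU E).IsHermitian := by
  refine (Matrix.isHermitian_diagonal _).sub ?_
  show (Au E)ᴴ = Au E
  rw [Matrix.conjTranspose_eq_transpose_of_trivial]
  ext u v
  by_cases h : u = v
  · subst h; rfl
  · simp [Au, Matrix.transpose_apply, h, Ne.symm h, hE u v]


section Aux

lemma sortDesc_zero_max {N : ℕ} (hN : 0 < N) (f : Fin N → ℝ) (i : Fin N) :
    f i ≤ sortDesc f ⟨0, hN⟩ := by
  have hmono := Tuple.monotone_sort f
  have : f i = (f ∘ Tuple.sort f) ((Tuple.sort f)⁻¹ i) := by simp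
  rw [this, sortDesc]
  exact hmono (by rw [Fin.le_def]; simp [Fin.rev]; omega)

lemma eig_le_of_quadform {m : Type*} [Fintype m] [DecidableEq m] {M : Matrix m m ℝ}
    (hM : M.IsHermitian) {c : ℝ} (h : ∀ x : m → ℝ, x ⬝ᵥ (M *ᵥ x) ≤ c * (x ⬝ᵥ x)) (i : m) :
    hM.eigenvalues i ≤ c := by
  set v : m → ℝ := ⇑(hM.eigenvectorBasis i) with hv
  have hveq : M *ᵥ v = hM.eigenvalues i • v := hM.mulVec_eigenvectorBasis i
  have hvne : v ≠ 0 := by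
    have := hM.eigenvectorBasis.orthonormal.ne_zero i
    intro hc
    exact this (by ext j; exact congrFun hc j)
  have hpos : 0 < v ⬝ᵥ v := by
    rcases lt_or_eq_of_le (Finset.sum_nonneg fun j _ => mul_self_nonneg (v j)) with h' | h'
    · exact h'
    · exact absurd (dotProduct_self_eq_zero.mp h'.symm) hvne
  have := h v
  rw [hveq, dotProduct_smul, smul_eq_mul] at this
  exact le_of_mul_le_mul_right (by linarith) hpos

lemma quadform_le_of_eig {m : Type*} [Fintype m] [DecidableEq m] {M : Matrix m m ℝ}
    (hM : M.IsHermitian) {c : ℝ} (h : ∀ i, hM.eigenvalues i ≤ c) (x : m → ℝ) :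
    x ⬝ᵥ (M *ᵥ x) ≤ c * (x ⬝ᵥ x) := by
  set U : Matrix m m ℝ := (hM.eigenvectorUnitary : Matrix m m ℝ) with hU
  have hUU : U * star U = 1 := (Matrix.mem_unitaryGroup_iff).mp hM.eigenvectorUnitary.2
  have hdec : c • (1 : Matrix m m ℝ) - M
      = U * Matrix.diagonal (fun i => c - hM.eigenvalues i) * Uᴴ := by
    have h1 : c • (1 : Matrix m m ℝ) = U * (c • (1 : Matrix m m ℝ)) * star U := by
      rw [Matrix.mul_smul, Matrix.smul_mul, Matrix.mul_one, hUU]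
    rw [← Matrix.star_eq_conjTranspose]
    calc c • (1 : Matrix m m ℝ) - M
        = U * (c • (1 : Matrix m m ℝ)) * star U
          - U * Matrix.diagonal (RCLike.ofReal ∘ hM.eigenvalues) * star U := by
          rw [← h1]; conv_lhs => arg 2; rw [hM.spectral_theorem]
          rfl
      _ = U * (c • (1 : Matrix m m ℝ)
            - Matrix.diagonal (RCLike.ofReal ∘ hM.eigenvalues)) * star U := by
          rw [Matrix.mul_sub, Matrix.sub_mul]
      _ = U * Matrix.diagonal (fun i => c - hM.eigenvalues i) * star U := by
          congr 2
          ext i j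
          by_cases hij : i = j <;>
            simp [Matrix.diagonal_apply, hij, Matrix.one_apply, Matrix.smul_apply]
  have hpsd : (c • (1 : Matrix m m ℝ) - M).PosSemidef := by
    rw [hdec]
    exact (Matrix.posSemidef_diagonal_iff.mpr
      fun i => sub_nonneg.mpr (h i)).mul_mul_conjTranspose_same U
  have h0 := hpsd.dotProduct_mulVec_nonneg x
  have hst : star x = x := by simp
  rw [hst, Matrix.sub_mulVec, Matrix.smul_mulVec, Matrix.one_mulVec, dotProduct_sub,
    dotProduct_smul, smul_eq_mul] at h0
  linarith

lemma Au_apply_simple (E : V → V → ℕ) (hEd : ∀ v, E v v = 0) (u v : V) :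
    Au E u v = (E u v : ℝ) := by
  by_cases h : u = v
  · subst h; simp [Au, hEd]
  · simp [Au, h]

lemma dU_cast (E : V → V → ℕ) (hEd : ∀ v, E v v = 0) (u : V) :
    ((dU E u : ℕ) : ℝ) = ∑ v, (E u v : ℝ) := by
  rw [dU, hEd]
  push_cast
  rw [Finset.filter_ne', ← Finset.add_sum_erase _ _ (Finset.mem_univ u), hEd]
  push_cast
  ring

lemma lapU_quadform (E : V → V → ℕ) (hEd : ∀ v, E v v = 0) (x : V → ℝ) :
    x ⬝ᵥ (lapU E *ᵥ x) = ∑ u, ∑ v, (E u v : ℝ) * (x u * x u - x u * x v) := by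
  rw [lapU, Matrix.sub_mulVec, dotProduct_sub]
  have h1 : x ⬝ᵥ (Matrix.diagonal (fun v => ((dU E v : ℕ) : ℝ)) *ᵥ x)
      = ∑ u, ∑ v, (E u v : ℝ) * (x u * x u) := by
    simp only [dotProduct, Matrix.mulVec_diagonal]
    refine Finset.sum_congr rfl fun u _ => ?_
    rw [dU_cast E hEd, Finset.sum_mul, Finset.mul_sum]
    exact Finset.sum_congr rfl fun v _ => by ring
  have h2 : x ⬝ᵥ (Au E *ᵥ x) = ∑ u, ∑ v, (E u v : ℝ) * (x u * x v) := by
    simp only [dotProduct, Matrix.mulVec, Finset.mul_sum]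
    refine Finset.sum_congr rfl fun u _ => Finset.sum_congr rfl fun v _ => ?_
    rw [Au_apply_simple E hEd]; ring
  rw [h1, h2, ← Finset.sum_sub_distrib]
  refine Finset.sum_congr rfl fun u _ => ?_
  rw [← Finset.sum_sub_distrib]
  exact Finset.sum_congr rfl fun v _ => by ring

lemma lapU_quadform_nonneg (E : V → V → ℕ) (hE : ∀ u v, E u v = E v u)
    (hEd : ∀ v, E v v = 0) (x : V → ℝ) : 0 ≤ x ⬝ᵥ (lapU E *ᵥ x) := by
  have hq := lapU_quadform E hEd x
  have hswap : ∑ u, ∑ v, (E u v : ℝ) * (x u * x u - x u * x v)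
      = ∑ u, ∑ v, (E u v : ℝ) * (x v * x v - x u * x v) := by
    rw [Finset.sum_comm]
    refine Finset.sum_congr rfl fun u _ => Finset.sum_congr rfl fun v _ => ?_
    rw [hE v u]; ring
  have h2 : 2 * (x ⬝ᵥ (lapU E *ᵥ x)) = ∑ u, ∑ v, (E u v : ℝ) * (x u - x v) ^ 2 := by
    rw [two_mul]
    nth_rewrite 1 [hq]
    rw [hswap, hq, ← Finset.sum_add_distrib]
    refine Finset.sum_congr rfl fun u _ => ?_
    rw [← Finset.sum_add_distrib]
    exact Finset.sum_congr rfl fun v _ => by ring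
  have hnn : 0 ≤ ∑ u, ∑ v, (E u v : ℝ) * (x u - x v) ^ 2 :=
    Finset.sum_nonneg fun u _ => Finset.sum_nonneg fun v _ =>
      mul_nonneg (Nat.cast_nonneg _) (sq_nonneg _)
  linarith

lemma intLap_blocks (E A : V → V → ℕ) :
    intLap E A = Matrix.fromBlocks
      (lapU E + Matrix.diagonal fun u => ((dOut A u : ℕ) : ℝ)) (-(Bm A))
      (-(Bm A)ᵀ) (lapU E + Matrix.diagonal fun u => ((dIn A u : ℕ) : ℝ)) := by
  ext p q
  cases p with
  | inl p =>
    cases q with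
    | inl q =>
      by_cases hpq : p = q <;>
        simp [intLap, intDeg, intAdj, lapU, Matrix.diagonal_apply, hpq, Matrix.sub_apply,
          Matrix.add_apply] <;> push_cast <;> ring
    | inr q => simp [intLap, intDeg, intAdj, Matrix.diagonal_apply, Matrix.sub_apply]
  | inr p =>
    cases q with
    | inl q => simp [intLap, intDeg, intAdj, Matrix.diagonal_apply, Matrix.sub_apply]
    | inr q =>
      by_cases hpq : p = q <;>
        simp [intLap, intDeg, intAdj, lapU, Matrix.diagonal_apply, hpq, Matrix.sub_apply,
          Matrix.add_apply] <;> push_cast <;> ring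

end Aux

/-- `ν₁(G) ≤ 2·μ₁ + max_v d⁺(v) + max_v d⁻(v)`, where `μ₁` is the largest
eigenvalue of the Laplacian `L(Gᵤ)` of the undirected part. -/
theorem stmt9 (n : ℕ) (hn : 0 < n) (E A : Fin n → Fin n → ℕ)
    (hE : ∀ u v, E u v = E v u) (hS : IsSimple E A) :
    nuT E A hE ⟨0, by omega⟩ ≤
      2 * sortDesc (fun i : Fin n => (lapU_isHermitian E hE).eigenvalues i) ⟨0, hn⟩ +
        ((Finset.univ.sup (dOut A) : ℕ) : ℝ) + ((Finset.univ.sup (dIn A) : ℕ) : ℝ) := by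
  obtain ⟨hE1, hA1, hEd, hAd⟩ := hS
  set μ := sortDesc (fun i : Fin n => (lapU_isHermitian E hE).eigenvalues i) ⟨0, hn⟩ with hμdef
  set a : ℝ := ((Finset.univ.sup (dOut A) : ℕ) : ℝ) with hadef
  set b : ℝ := ((Finset.univ.sup (dIn A) : ℕ) : ℝ) with hbdef
  have hLmax : ∀ i, (lapU_isHermitian E hE).eigenvalues i ≤ μ :=
    fun i => sortDesc_zero_max hn _ i
  have hLquad : ∀ y : Fin n → ℝ, y ⬝ᵥ (lapU E *ᵥ y) ≤ μ * (y ⬝ᵥ y) :=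
    quadform_le_of_eig _ hLmax
  have hμ0 : 0 ≤ μ := by
    have hpsd : (lapU E).PosSemidef :=
      Matrix.PosSemidef.of_dotProduct_mulVec_nonneg (lapU_isHermitian E hE) fun x => by
        have hst : star x = x := by simp
        rw [hst]; exact lapU_quadform_nonneg E hE hEd x
    have : ∃ j, μ = (lapU_isHermitian E hE).eigenvalues j := ⟨_, rfl⟩
    obtain ⟨j, hj⟩ := this
    rw [hj]
    exact hpsd.eigenvalues_nonneg j
  obtain ⟨j, hj⟩ : ∃ j, nuT E A hE ⟨0, by omega⟩
      = (intLap_isHermitian E A hE).eigenvalues (finSumFinEquiv.symm j) :=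
    ⟨Tuple.sort (fun i => (intLap_isHermitian E A hE).eigenvalues (finSumFinEquiv.symm i))
      (Fin.rev ⟨0, by omega⟩), rfl⟩
  rw [hj]
  refine eig_le_of_quadform _ (fun x => ?_) _
  set y : Fin n → ℝ := fun u => x (Sum.inl u) with hy
  set z : Fin n → ℝ := fun u => x (Sum.inr u) with hz
  have hx : x = Sum.elim y z := by funext p; cases p <;> rfl
  -- bounds on degrees
  have haub : ∀ u, ((dOut A u : ℕ) : ℝ) ≤ a :=
    fun u => Nat.cast_le.mpr (Finset.le_sup (Finset.mem_univ u))
  have hbub : ∀ u, ((dIn A u : ℕ) : ℝ) ≤ b :=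
    fun u => Nat.cast_le.mpr (Finset.le_sup (Finset.mem_univ u))
  have ha0 : 0 ≤ a := Nat.cast_nonneg _
  have hb0 : 0 ≤ b := Nat.cast_nonneg _
  -- expand the quadratic form
  rw [hx, intLap_blocks, Matrix.fromBlocks_mulVec, sumElim_dotProduct_sumElim,
    sumElim_dotProduct_sumElim]
  simp only [Sum.elim_comp_inl, Sum.elim_comp_inr]
  simp only [Matrix.add_mulVec, Matrix.neg_mulVec, dotProduct_add, dotProduct_neg]
  have hDout : y ⬝ᵥ (Matrix.diagonal (fun u => ((dOut A u : ℕ) : ℝ)) *ᵥ y)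
      = ∑ u, ((dOut A u : ℕ) : ℝ) * (y u * y u) := by
    simp only [dotProduct, Matrix.mulVec_diagonal]
    exact Finset.sum_congr rfl fun u _ => by ring
  have hDin : z ⬝ᵥ (Matrix.diagonal (fun u => ((dIn A u : ℕ) : ℝ)) *ᵥ z)
      = ∑ u, ((dIn A u : ℕ) : ℝ) * (z u * z u) := by
    simp only [dotProduct, Matrix.mulVec_diagonal]
    exact Finset.sum_congr rfl fun u _ => by ring
  set P : ℝ := ∑ u, ∑ v, (A u v : ℝ) * (y u * z v) with hP
  have hBP : y ⬝ᵥ (Bm A *ᵥ z) = P := by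
    rw [hP]
    simp only [dotProduct, Matrix.mulVec, Finset.mul_sum]
    exact Finset.sum_congr rfl fun u _ => Finset.sum_congr rfl fun v _ => by
      simp [Bm]; ring
  have hBPT : z ⬝ᵥ ((Bm A)ᵀ *ᵥ y) = P := by
    rw [hP, Finset.sum_comm]
    simp only [dotProduct, Matrix.mulVec, Finset.mul_sum]
    exact Finset.sum_congr rfl fun v _ => Finset.sum_congr rfl fun u _ => by
      simp [Bm, Matrix.transpose_apply]; ring
  rw [hDout, hDin, hBP, hBPT]
  -- degree sums
  have hdOsum : ∀ u, ((dOut A u : ℕ) : ℝ) = ∑ v, (A u v : ℝ) := by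
    intro u; rw [dOut]; push_cast; rfl
  have hdIsum : ∀ v, ((dIn A v : ℕ) : ℝ) = ∑ u, (A u v : ℝ) := by
    intro v; rw [dIn]; push_cast; rfl
  have hSy : 0 ≤ y ⬝ᵥ y := Finset.sum_nonneg fun u _ => mul_self_nonneg _
  have hSz : 0 ≤ z ⬝ᵥ z := Finset.sum_nonneg fun u _ => mul_self_nonneg _
  have hDoutle : ∑ u, ((dOut A u : ℕ) : ℝ) * (y u * y u) ≤ a * (y ⬝ᵥ y) := by
    rw [dotProduct, Finset.mul_sum]
    exact Finset.sum_le_sum fun u _ =>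
      mul_le_mul_of_nonneg_right (haub u) (mul_self_nonneg _)
  have hDinle : ∑ u, ((dIn A u : ℕ) : ℝ) * (z u * z u) ≤ b * (z ⬝ᵥ z) := by
    rw [dotProduct, Finset.mul_sum]
    exact Finset.sum_le_sum fun u _ =>
      mul_le_mul_of_nonneg_right (hbub u) (mul_self_nonneg _)
  -- the key arc bound
  have harc : -(2 * P) ≤ b * (y ⬝ᵥ y) + a * (z ⬝ᵥ z) := by
    by_cases hA0 : ∀ u v, A u v = 0
    · have : P = 0 := by
        rw [hP]
        refine Finset.sum_eq_zero fun u _ => Finset.sum_eq_zero fun v _ => by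
          rw [hA0 u v]; simp
      rw [this]
      simp only [mul_zero, neg_zero]
      exact add_nonneg (mul_nonneg hb0 hSy) (mul_nonneg ha0 hSz)
    · push_neg at hA0
      obtain ⟨u0, v0, huv0⟩ := hA0
      have hapos : 0 < a := by
        have h1 : 1 ≤ dOut A u0 := by
          rw [dOut]
          calc 1 ≤ A u0 v0 := Nat.one_le_iff_ne_zero.mpr huv0
            _ ≤ ∑ v, A u0 v := Finset.single_le_sum (f := fun v => A u0 v)
              (fun v _ => Nat.zero_le _) (Finset.mem_univ v0)
        calc (0:ℝ) < 1 := one_pos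
          _ ≤ ((dOut A u0 : ℕ) : ℝ) := by exact_mod_cast h1
          _ ≤ a := haub u0
      have hbpos : 0 < b := by
        have h1 : 1 ≤ dIn A v0 := by
          rw [dIn]
          calc 1 ≤ A u0 v0 := Nat.one_le_iff_ne_zero.mpr huv0
            _ ≤ ∑ u, A u v0 := Finset.single_le_sum (f := fun u => A u v0)
              (fun u _ => Nat.zero_le _) (Finset.mem_univ u0)
        calc (0:ℝ) < 1 := one_pos
          _ ≤ ((dIn A v0 : ℕ) : ℝ) := by exact_mod_cast h1
          _ ≤ b := hbub v0
      set t : ℝ := b / a with ht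
      have htpos : 0 < t := div_pos hbpos hapos
      have hpt : ∀ u v, (A u v : ℝ) * (-(2 * (y u * z v)))
          ≤ (A u v : ℝ) * (t * (y u * y u) + (z v * z v) / t) := by
        intro u v
        refine mul_le_mul_of_nonneg_left ?_ (Nat.cast_nonneg _)
        rw [← sub_nonneg]
        have : t * (y u * y u) + (z v * z v) / t - -(2 * (y u * z v))
            = (t * y u + z v) ^ 2 / t := by
          field_simp; ring
        rw [this]
        positivity
      have step1 : -(2 * P) ≤ ∑ u, ∑ v, (A u v : ℝ) * (t * (y u * y u) + (z v * z v) / t) := by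
        have : -(2 * P) = ∑ u, ∑ v, (A u v : ℝ) * (-(2 * (y u * z v))) := by
          rw [hP, Finset.mul_sum, ← Finset.sum_neg_distrib]
          refine Finset.sum_congr rfl fun u _ => ?_
          rw [Finset.mul_sum, ← Finset.sum_neg_distrib]
          exact Finset.sum_congr rfl fun v _ => by ring
        rw [this]
        exact Finset.sum_le_sum fun u _ => Finset.sum_le_sum fun v _ => hpt u v
      have step2 : ∑ u, ∑ v, (A u v : ℝ) * (t * (y u * y u) + (z v * z v) / t)
          = t * ∑ u, ((dOut A u : ℕ) : ℝ) * (y u * y u)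
            + (1 / t) * ∑ v, ((dIn A v : ℕ) : ℝ) * (z v * z v) := by
        have hsplit : ∀ u v, (A u v : ℝ) * (t * (y u * y u) + (z v * z v) / t)
            = (A u v : ℝ) * (t * (y u * y u)) + (A u v : ℝ) * ((z v * z v) / t) :=
          fun u v => by ring
        simp only [hsplit, Finset.sum_add_distrib]
        congr 1
        · rw [Finset.mul_sum]
          refine Finset.sum_congr rfl fun u _ => ?_
          rw [hdOsum, Finset.sum_mul, Finset.mul_sum]
          exact Finset.sum_congr rfl fun v _ => by ring
        · rw [Finset.sum_comm, Finset.mul_sum]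
          refine Finset.sum_congr rfl fun v _ => ?_
          rw [hdIsum, Finset.sum_mul, Finset.mul_sum]
          exact Finset.sum_congr rfl fun u _ => by ring
      have htA : t * a = b := div_mul_cancel₀ b (ne_of_gt hapos)
      have htB : (1 / t) * b = a := by
        rw [ht]; field_simp
      calc -(2 * P) ≤ t * ∑ u, ((dOut A u : ℕ) : ℝ) * (y u * y u)
            + (1 / t) * ∑ v, ((dIn A v : ℕ) : ℝ) * (z v * z v) := by
            rw [← step2]; exact step1
        _ ≤ t * (a * (y ⬝ᵥ y)) + (1 / t) * (b * (z ⬝ᵥ z)) :=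
            add_le_add (mul_le_mul_of_nonneg_left hDoutle htpos.le)
              (mul_le_mul_of_nonneg_left hDinle (by positivity))
        _ = b * (y ⬝ᵥ y) + a * (z ⬝ᵥ z) := by
            rw [← mul_assoc, htA, ← mul_assoc, htB]
  nlinarith [hLquad y, hLquad z, hDoutle, hDinle, harc, mul_nonneg hμ0 hSy,
    mul_nonneg hμ0 hSz, mul_nonneg ha0 hSy, mul_nonneg hb0 hSz]
end
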